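/- arXiv:2203.06633 — 7 statements merged into one kernel-verified Lean document; each statement's English description precedes it below -/
import Mathlib

section
/- The square root velocity transform R is a bijection from AC₀([0,1]; ℝ^d) = {c ∈ AC : c(0) = 0} onto L²([0,1]; ℝ^d), with inverse given by R⁻¹(q)(x) = ∫₀ˣ q(y)|q(y)| dy. -/
open MeasureTheory Set
open scoped Classical

/-- The square root velocity transform, applied to the derivative `v = ċ` of a curve. -/
noncomputable def SRVT (d : ℕ) (v : ℝ → EuclideanSpace ℝ (Fin d)) :
    ℝ → EuclideanSpace ℝ (Fin d) :=
  fun x => if v x = 0 then 0 else (Real.sqrt ‖v x‖)⁻¹ • v x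

lemma srvt_left_inv (d : ℕ) (v : ℝ → EuclideanSpace ℝ (Fin d)) (y : ℝ) :
    ‖SRVT d v y‖ • SRVT d v y = v y := by
  unfold SRVT
  by_cases h : v y = 0
  · simp [h]
  · simp only [h, if_neg, if_false]
    have hn : ‖v y‖ ≠ 0 := norm_ne_zero_iff.mpr h
    have hpos : (0:ℝ) < ‖v y‖ := lt_of_le_of_ne (norm_nonneg _) (Ne.symm hn)
    have hs : Real.sqrt ‖v y‖ ≠ 0 := by positivity
    rw [norm_smul, norm_inv, Real.norm_eq_abs, abs_of_nonneg (Real.sqrt_nonneg _),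
      smul_smul]
    have : (Real.sqrt ‖v y‖)⁻¹ * ‖v y‖ * (Real.sqrt ‖v y‖)⁻¹ = 1 := by
      field_simp
      rw [Real.sq_sqrt hpos.le]
    rw [this, one_smul]

lemma srvt_right_inv (d : ℕ) (q : ℝ → EuclideanSpace ℝ (Fin d)) (x : ℝ) :
    SRVT d (fun y => ‖q y‖ • q y) x = q x := by
  unfold SRVT
  by_cases h : q x = 0
  · simp [h]
  · have hn : ‖q x‖ ≠ 0 := norm_ne_zero_iff.mpr h
    have hne : ‖q x‖ • q x ≠ 0 := smul_ne_zero hn h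
    simp only [hne, if_neg, if_false]
    rw [norm_smul, Real.norm_eq_abs, abs_of_nonneg (norm_nonneg _),
      Real.sqrt_mul_self (norm_nonneg _), smul_smul, inv_mul_cancel₀ hn, one_smul]

/-- The SRVT is a bijection from `AC₀([0,1];ℝ^d)` onto `L²([0,1];ℝ^d)`,
with inverse `R⁻¹(q)(x) = ∫₀ˣ q|q| dy`.  Injectivity/left-inverse: every `c ∈ AC₀`
(with `c(0) = 0` and derivative `c'`) is recovered from `R(c)` by the inverse formula.
Surjectivity/right-inverse: every `q ∈ L²` arises as `R(c)` for the curve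
`c(x) = ∫₀ˣ q|q| dy`, which is in `AC₀` with integrable derivative `q|q|`. -/
theorem srvt_bijective_AC0_L2 (d : ℕ) :
    (∀ c c' : ℝ → EuclideanSpace ℝ (Fin d),
      IntegrableOn c' (Icc (0:ℝ) 1) → c 0 = 0 →
      (∀ x ∈ Icc (0:ℝ) 1, c x = ∫ t in (0:ℝ)..x, c' t) →
      ∀ x ∈ Icc (0:ℝ) 1,
        c x = ∫ y in (0:ℝ)..x, ‖SRVT d c' y‖ • SRVT d c' y) ∧
    (∀ q : ℝ → EuclideanSpace ℝ (Fin d),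
      MemLp q 2 (volume.restrict (Icc (0:ℝ) 1)) →
      IntegrableOn (fun y => ‖q y‖ • q y) (Icc (0:ℝ) 1) ∧
      ∀ x, SRVT d (fun y => ‖q y‖ • q y) x = q x) := by
  constructor
  · intro c c' _ _ hc x hx
    rw [hc x hx]
    congr 1
    funext y
    exact (srvt_left_inv d c' y).symm
  · intro q hq
    refine ⟨?_, srvt_right_inv d q⟩
    have hmeas : AEStronglyMeasurable (fun y => ‖q y‖ • q y)
        (volume.restrict (Icc (0:ℝ) 1)) :=
      hq.aestronglyMeasurable.norm.smul hq.aestronglyMeasurable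
    have hint : Integrable (fun y => ‖q y‖ ^ (2:ℝ)) (volume.restrict (Icc (0:ℝ) 1)) :=
      hq.integrable_norm_rpow (by norm_num) (by norm_num)
    refine hint.mono' hmeas ?_
    filter_upwards with y
    rw [norm_smul, Real.norm_eq_abs, abs_of_nonneg (norm_nonneg _)]
    have : ‖q y‖ ^ (2:ℝ) = ‖q y‖ * ‖q y‖ := by
      rw [Real.rpow_two]; ring
    rw [this]
end

section
/- The set Γ̄ = {γ ∈ AC([0,1];[0,1]) : γ(0)=0, γ(1)=1, γ' ≥ 0 a.e.} is the closure in AC([0,1];[0,1]) (with respect to the norm topology, i.e. ‖γ‖ = |γ(0)| + ‖γ'‖_{L¹}) of the set Γ = {γ ∈ AC([0,1];[0,1]) : γ(0)=0, γ(1)=1, γ' > 0 a.e.}. -/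
open MeasureTheory Set

set_option synthInstance.maxHeartbeats 1000000 in
/-- Identifying an absolutely continuous reparametrisation `γ` of `[0,1]`
(with `γ(0) = 0`) with its derivative `γ' ∈ L¹([0,1])` — under which the AC norm
`|γ(0)| + ‖γ'‖_{L¹}` becomes the `L¹` norm — the set `Γ̄` (corresponding to
`{g ∈ L¹ : g ≥ 0 a.e., ∫ g = 1}`, i.e. `γ' ≥ 0` a.e., `γ(1) = 1`) is the closure of
`Γ` (corresponding to `{g ∈ L¹ : g > 0 a.e., ∫ g = 1}`, i.e. `γ' > 0` a.e.,
`γ(1) = 1`) in the norm topology. -/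
theorem gammaBar_eq_closure_gamma :
    closure {f : Lp ℝ 1 (volume.restrict (Icc (0:ℝ) 1)) |
        (∀ᵐ x ∂(volume.restrict (Icc (0:ℝ) 1)), 0 < f x) ∧
        (∫ x, f x ∂(volume.restrict (Icc (0:ℝ) 1))) = 1}
      = {f : Lp ℝ 1 (volume.restrict (Icc (0:ℝ) 1)) |
        (∀ᵐ x ∂(volume.restrict (Icc (0:ℝ) 1)), 0 ≤ f x) ∧
        (∫ x, f x ∂(volume.restrict (Icc (0:ℝ) 1))) = 1} := by
  set μ : Measure ℝ := volume.restrict (Icc (0:ℝ) 1) with hμdef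
  have hμuniv : μ Set.univ = 1 := by
    simp [hμdef, Real.volume_Icc]
  haveI : IsFiniteMeasure μ := ⟨by rw [hμuniv]; exact ENNReal.one_lt_top⟩
  apply Set.Subset.antisymm
  · -- closure Γ ⊆ Γ̄, since Γ̄ is closed and contains Γ
    apply closure_minimal
    · intro f hf
      exact ⟨hf.1.mono fun x hx => le_of_lt hx, hf.2⟩
    · have h1 : IsClosed {f : Lp ℝ 1 μ | 0 ≤ f} :=
        isClosed_le continuous_const continuous_id
      have h2 : IsClosed {f : Lp ℝ 1 μ | (∫ x, f x ∂μ) = 1} :=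
        isClosed_eq continuous_integral continuous_const
      have : {f : Lp ℝ 1 μ |
          (∀ᵐ x ∂μ, 0 ≤ f x) ∧ (∫ x, f x ∂μ) = 1}
          = {f : Lp ℝ 1 μ | 0 ≤ f} ∩ {f : Lp ℝ 1 μ | (∫ x, f x ∂μ) = 1} := by
        ext f
        simp only [Set.mem_setOf_eq, Set.mem_inter_iff]
        rw [← Lp.coeFn_nonneg]
        rfl
      rw [this]
      exact h1.inter h2
  · -- Γ̄ ⊆ closure Γ
    intro f hf
    obtain ⟨hf0, hf1⟩ := hf
    set c : Lp ℝ 1 μ := Lp.const 1 μ (1:ℝ) with hc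
    have hcint : (∫ x, c x ∂μ) = 1 := by
      rw [integral_congr_ae (Lp.coeFn_const 1 μ (1:ℝ))]
      simp [hμuniv, Measure.real]
    -- approximating sequence
    set t : ℕ → ℝ := fun n => 1 / (n + 1) with ht
    have ht0 : ∀ n, 0 < t n := fun n => by positivity
    have ht1 : ∀ n, t n ≤ 1 := fun n => by
      rw [ht]
      rw [div_le_one (by positivity)]
      linarith [Nat.cast_nonneg (α := ℝ) n]
    set g : ℕ → Lp ℝ 1 μ := fun n => f + t n • (c - f) with hg
    have htend : Filter.Tendsto g Filter.atTop (nhds f) := by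
      have h0 : Filter.Tendsto t Filter.atTop (nhds 0) :=
        tendsto_one_div_add_atTop_nhds_zero_nat
      have : Filter.Tendsto (fun n => f + t n • (c - f)) Filter.atTop
          (nhds (f + (0:ℝ) • (c - f))) :=
        Filter.Tendsto.const_add _ (h0.smul_const _)
      simpa using this
    have hmem : ∀ n, g n ∈ {f : Lp ℝ 1 μ |
        (∀ᵐ x ∂μ, 0 < f x) ∧ (∫ x, f x ∂μ) = 1} := by
      intro n
      have hae : (g n : ℝ → ℝ) =ᵐ[μ] fun x => f x + t n * ((1:ℝ) - f x) := by
        filter_upwards [Lp.coeFn_add f (t n • (c - f)), Lp.coeFn_smul (t n) (c - f),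
          Lp.coeFn_sub c f, Lp.coeFn_const 1 μ (1:ℝ)] with x h1 h2 h3 h4
        rw [hg]
        simp only [h1, Pi.add_apply, h2, Pi.smul_apply, h3, Pi.sub_apply, h4,
          Function.const_apply, smul_eq_mul]
        simp only [hc, h4, Function.const_apply]
      constructor
      · filter_upwards [hae, hf0] with x h1 h2
        rw [h1]
        have : f x + t n * (1 - f x) = (1 - t n) * f x + t n := by ring
        rw [this]
        have : (0:ℝ) ≤ (1 - t n) * f x :=
          mul_nonneg (by linarith [ht1 n]) h2
        linarith [ht0 n]
      · rw [integral_congr_ae hae]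
        have hif : Integrable (fun x => f x) μ := L1.integrable_coeFn f
        have hic : Integrable (fun _ : ℝ => (1:ℝ)) μ := integrable_const _
        have h1 : Integrable (fun x => (1:ℝ) - f x) μ := hic.sub hif
        rw [integral_add hif (h1.const_mul _), integral_const_mul,
          integral_sub hic hif, hf1]
        simp [hμuniv, Measure.real]
    exact mem_closure_of_tendsto htend (Filter.Eventually.of_forall hmem)
end

section
/- The functional S(c₁,c₂) = ∫₀¹ ⟨ċ₁/|ċ₁|, ċ₂/|ċ₂|⟩ √(|ċ₁||ċ₂|) dx on absolutely continuous curves is invariant under simultaneous reparametrisation: for all φ ∈ Γ̄, S(c₁ ∘ φ, c₂ ∘ φ) = S(c₁, c₂). -/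
open MeasureTheory Set
open scoped Classical RealInnerProductSpace

/-- The integrand of the SRV similarity functional `S`:
`h(u,v) = ⟨u/|u|, v/|v|⟩ √(|u||v|)`, set to `0` if `u = 0` or `v = 0`. -/
noncomputable def srvIntegrand (d : ℕ) (u v : EuclideanSpace ℝ (Fin d)) : ℝ :=
  if u = 0 ∨ v = 0 then 0
  else (inner ℝ (‖u‖⁻¹ • u) (‖v‖⁻¹ • v) : ℝ) * Real.sqrt (‖u‖ * ‖v‖)


lemma srvIntegrand_smul (d : ℕ) {a : ℝ} (ha : 0 ≤ a) (u v : EuclideanSpace ℝ (Fin d)) :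
    srvIntegrand d (a • u) (a • v) = a * srvIntegrand d u v := by
  rcases eq_or_lt_of_le ha with rfl | ha'
  · simp [srvIntegrand]
  unfold srvIntegrand
  by_cases h : u = 0 ∨ v = 0
  · rcases h with h | h <;> simp [h]
  push_neg at h
  have hau : a • u ≠ 0 := smul_ne_zero ha'.ne' h.1
  have hav : a • v ≠ 0 := smul_ne_zero ha'.ne' h.2
  rw [if_neg (by tauto), if_neg (by tauto)]
  have hnu : ‖a • u‖ = a * ‖u‖ := by rw [norm_smul, Real.norm_of_nonneg ha]
  have hnv : ‖a • v‖ = a * ‖v‖ := by rw [norm_smul, Real.norm_of_nonneg ha]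
  have h1 : ‖a • u‖⁻¹ • (a • u) = ‖u‖⁻¹ • u := by
    rw [hnu, smul_smul, mul_inv]
    rw [show a⁻¹ * ‖u‖⁻¹ * a = ‖u‖⁻¹ by
      rw [mul_comm a⁻¹, mul_assoc, inv_mul_cancel₀ ha'.ne', mul_one]]
  have h2 : ‖a • v‖⁻¹ • (a • v) = ‖v‖⁻¹ • v := by
    rw [hnv, smul_smul, mul_inv]
    rw [show a⁻¹ * ‖v‖⁻¹ * a = ‖v‖⁻¹ by
      rw [mul_comm a⁻¹, mul_assoc, inv_mul_cancel₀ ha'.ne', mul_one]]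
  rw [h1, h2, hnu, hnv,
    show a * ‖u‖ * (a * ‖v‖) = a ^ 2 * (‖u‖ * ‖v‖) by ring,
    Real.sqrt_mul (sq_nonneg a), Real.sqrt_sq ha]
  ring

lemma srvIntegrand_measurable (d : ℕ) :
    Measurable (fun p : EuclideanSpace ℝ (Fin d) × EuclideanSpace ℝ (Fin d) =>
      srvIntegrand d p.1 p.2) := by
  unfold srvIntegrand
  refine Measurable.ite ?_ measurable_const ?_
  · exact (measurable_fst (measurableSet_singleton 0)).union
      (measurable_snd (measurableSet_singleton 0))
  · apply Measurable.mul
    · exact Measurable.inner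
        ((measurable_fst.norm.inv).smul measurable_fst)
        ((measurable_snd.norm.inv).smul measurable_snd)
    · exact (measurable_fst.norm.mul measurable_snd.norm).sqrt

/-- The functional `S(c₁,c₂) = ∫₀¹ ⟨ċ₁/|ċ₁|, ċ₂/|ċ₂|⟩ √(|ċ₁||ċ₂|) dx`
is invariant under simultaneous reparametrisation by `φ ∈ Γ̄`: since the derivative of
`cᵢ ∘ φ` is `φ'·(ċᵢ ∘ φ)` a.e., we have `S(c₁∘φ, c₂∘φ) = S(c₁,c₂)`. -/
theorem srv_functional_reparam_invariant (d : ℕ)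
    (c₁ c₂ c₁' c₂' : ℝ → EuclideanSpace ℝ (Fin d)) (φ g : ℝ → ℝ)
    (hc₁' : IntegrableOn c₁' (Icc (0:ℝ) 1))
    (hc₂' : IntegrableOn c₂' (Icc (0:ℝ) 1))
    (hc₁ : ∀ x ∈ Icc (0:ℝ) 1, c₁ x = c₁ 0 + ∫ t in (0:ℝ)..x, c₁' t)
    (hc₂ : ∀ x ∈ Icc (0:ℝ) 1, c₂ x = c₂ 0 + ∫ t in (0:ℝ)..x, c₂' t)
    (hg : IntegrableOn g (Icc (0:ℝ) 1))
    (hg0 : ∀ᵐ x ∂(volume.restrict (Icc (0:ℝ) 1)), 0 ≤ g x)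
    (hφ : ∀ x ∈ Icc (0:ℝ) 1, φ x = ∫ t in (0:ℝ)..x, g t)
    (hφ1 : φ 1 = 1) :
    (∫ x in Icc (0:ℝ) 1, srvIntegrand d (g x • c₁' (φ x)) (g x • c₂' (φ x)))
      = ∫ x in Icc (0:ℝ) 1, srvIntegrand d (c₁' x) (c₂' x) := by
  have hIcc : MeasurableSet (Icc (0:ℝ) 1) := measurableSet_Icc
  set g' : ℝ → ℝ := (Icc (0:ℝ) 1).indicator g with hg'def
  have hg'int : Integrable g' := (integrable_indicator_iff hIcc).2 hg
  set ψ : ℝ → ℝ := fun x => ∫ t in (0:ℝ)..x, g' t with hψdef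
  have hψcont : Continuous ψ := hg'int.continuous_primitive 0
  have hg'0 : ∀ᵐ x ∂(volume : Measure ℝ), 0 ≤ g' x := by
    have h1 := (ae_restrict_iff' hIcc).1 hg0
    filter_upwards [h1] with x hx
    by_cases h : x ∈ Icc (0:ℝ) 1
    · simpa [hg'def, indicator_of_mem h] using hx h
    · simp [hg'def, indicator_of_notMem h]
  have hψmono : Monotone ψ := by
    intro x y hxy
    have hadd : ψ x + ∫ t in x..y, g' t = ψ y :=
      intervalIntegral.integral_add_adjacent_intervals
        hg'int.intervalIntegrable hg'int.intervalIntegrable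
    have hnn : 0 ≤ ∫ t in x..y, g' t :=
      intervalIntegral.integral_nonneg_of_ae hxy hg'0
    linarith [hadd]
  have hψ0 : ψ 0 = 0 := by simp [hψdef]
  have hψφ : ∀ x ∈ Icc (0:ℝ) 1, ψ x = φ x := by
    intro x hx
    rw [hφ x hx, hψdef]
    refine intervalIntegral.integral_congr ?_
    intro t ht
    rw [uIcc_of_le hx.1] at ht
    exact indicator_of_mem (mem_Icc.2 ⟨ht.1, ht.2.trans hx.2⟩) g
  have hψ1 : ψ 1 = 1 := by rw [hψφ 1 (by norm_num), hφ1]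
  have hψnn : ∀ x ∈ Icc (0:ℝ) 1, 0 ≤ ψ x := fun x hx => hψ0 ▸ hψmono hx.1
  set μ₀ : Measure ℝ := volume.restrict (Icc (0:ℝ) 1) with hμ₀
  set ν : Measure ℝ := μ₀.withDensity (fun x => ENNReal.ofReal (g x)) with hν
  have hgae : AEMeasurable g μ₀ := hg.aemeasurable
  have hνA : ∀ A : Set ℝ, MeasurableSet A →
      ν A = ∫⁻ x in A ∩ Icc (0:ℝ) 1, ENNReal.ofReal (g x) := by
    intro A hA
    rw [hν, withDensity_apply _ hA, hμ₀, Measure.restrict_restrict hA]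
  have hνIcc : ∀ t ∈ Icc (0:ℝ) 1, ν (Icc 0 t) = ENNReal.ofReal (ψ t) := by
    intro t ht
    rw [hνA _ measurableSet_Icc, inter_eq_left.2 (Icc_subset_Icc le_rfl ht.2)]
    have hint : IntegrableOn g (Icc 0 t) := hg.mono_set (Icc_subset_Icc le_rfl ht.2)
    have hnn : 0 ≤ᵐ[volume.restrict (Icc 0 t)] g :=
      ae_restrict_of_ae_restrict_of_subset (Icc_subset_Icc le_rfl ht.2) hg0
    rw [← ofReal_integral_eq_lintegral_ofReal hint hnn]
    congr 1
    rw [hψφ t ht, hφ t ht, intervalIntegral.integral_of_le ht.1,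
      ← integral_Icc_eq_integral_Ioc]
  haveI hνfin : IsFiniteMeasure ν := by
    constructor
    rw [hνA _ MeasurableSet.univ, univ_inter]
    calc ∫⁻ x in Icc (0:ℝ) 1, ENNReal.ofReal (g x)
        ≤ ∫⁻ x in Icc (0:ℝ) 1, (‖g x‖₊ : ENNReal) := by
          refine lintegral_mono fun x => ?_
          rw [← ENNReal.ofReal_coe_nnreal, coe_nnnorm, Real.norm_eq_abs]
          exact ENNReal.ofReal_le_ofReal (le_abs_self _)
      _ < ⊤ := hg.2
  -- the pushforward of ν under ψ is μ₀
  have hmap : Measure.map ψ ν = μ₀ := by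
    haveI : IsFiniteMeasure (Measure.map ψ ν) := by
      constructor
      rw [Measure.map_apply hψcont.measurable MeasurableSet.univ, preimage_univ]
      exact measure_lt_top ν _
    refine Measure.ext_of_Iic _ _ (fun a => ?_)
    rw [Measure.map_apply hψcont.measurable measurableSet_Iic, hμ₀,
      Measure.restrict_apply measurableSet_Iic]
    rcases lt_or_ge a 0 with ha | ha
    · have h1 : ψ ⁻¹' Iic a ∩ Icc (0:ℝ) 1 = ∅ := by
        ext x
        simp only [mem_inter_iff, mem_preimage, mem_Iic, mem_empty_iff_false, iff_false]
        rintro ⟨hxa, hx⟩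
        exact absurd (le_trans (hψnn x hx) hxa) (not_le.2 ha)
      have h2 : Iic a ∩ Icc (0:ℝ) 1 = ∅ := by
        ext x
        simp only [mem_inter_iff, mem_Iic, mem_Icc, mem_empty_iff_false, iff_false]
        rintro ⟨hxa, hx0, -⟩
        linarith
      rw [hνA _ (hψcont.measurable measurableSet_Iic), h1, h2]
      simp
    · set S : Set ℝ := Icc (0:ℝ) 1 ∩ ψ ⁻¹' (Iic a) with hS
      have hScl : IsClosed S := isClosed_Icc.inter (isClosed_Iic.preimage hψcont)
      have hSne : S.Nonempty := ⟨0, by norm_num, by simpa [hψ0] using ha⟩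
      have hSbdd : BddAbove S := (bddAbove_Icc).mono inter_subset_left
      set t := sSup S with htdef
      have htS : t ∈ S := hScl.csSup_mem hSne hSbdd
      have htIcc : t ∈ Icc (0:ℝ) 1 := htS.1
      have htle : ψ t ≤ a := htS.2
      have hψt : ψ t = min a 1 := by
        rcases le_or_gt 1 a with h1a | h1a
        · have h1S : (1:ℝ) ∈ S := ⟨by norm_num, by simpa [hψ1] using h1a⟩
          have : t = 1 := le_antisymm htIcc.2 (le_csSup hSbdd h1S)
          rw [this, hψ1, min_eq_right h1a]
        · rw [min_eq_left h1a.le]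
          by_contra hne
          have hlt : ψ t < a := lt_of_le_of_ne htle hne
          have ht1 : t < 1 := by
            rcases lt_or_eq_of_le htIcc.2 with h | h
            · exact h
            · exfalso; rw [h, hψ1] at hlt; linarith
          have hopen : ∀ᶠ y in nhds t, ψ y < a :=
            (isOpen_lt hψcont continuous_const).eventually_mem hlt
          have hev : ∀ᶠ y in nhdsWithin t (Ioi t), ψ y < a :=
            eventually_nhdsWithin_of_eventually_nhds hopen
          have hev2 : ∀ᶠ y in nhdsWithin t (Ioi t), y ∈ Ioo t 1 :=
            Ioo_mem_nhdsGT_of_mem ⟨le_rfl, ht1⟩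
          obtain ⟨y, hy1, hy2⟩ := (hev.and hev2).exists
          have hyS : y ∈ S :=
            ⟨⟨htIcc.1.trans hy2.1.le, hy2.2.le⟩, hy1.le⟩
          exact absurd (le_csSup hSbdd hyS) (not_le.2 hy2.1)
      have hpre : ψ ⁻¹' Iic a ∩ Icc (0:ℝ) 1 = Icc 0 t := by
        ext x
        simp only [mem_inter_iff, mem_preimage, mem_Iic, mem_Icc]
        constructor
        · rintro ⟨hxa, hx0, hx1⟩
          exact ⟨hx0, le_csSup hSbdd ⟨⟨hx0, hx1⟩, hxa⟩⟩
        · rintro ⟨hx0, hxt⟩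
          exact ⟨le_trans (hψmono hxt) (hψt ▸ min_le_left a 1),
            hx0, hxt.trans htIcc.2⟩
      have hIic : Iic a ∩ Icc (0:ℝ) 1 = Icc 0 (min a 1) := by
        ext x
        simp only [mem_inter_iff, mem_Iic, mem_Icc, le_min_iff]
        tauto
      rw [hνA _ (hψcont.measurable measurableSet_Iic), hpre]
      have hIcct := hνIcc t htIcc
      rw [hνA _ measurableSet_Icc, inter_eq_left.2 (Icc_subset_Icc le_rfl htIcc.2)] at hIcct
      rw [hIcct, hψt, hIic, Real.volume_Icc, sub_zero]
  -- the integrand as a function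
  set f : ℝ → ℝ := fun x => srvIntegrand d (c₁' x) (c₂' x) with hfdef
  have hfaesm : AEStronglyMeasurable f μ₀ :=
    ((srvIntegrand_measurable d).comp_aemeasurable
      (hc₁'.aemeasurable.prodMk hc₂'.aemeasurable)).aestronglyMeasurable
  have hfaesm' : AEStronglyMeasurable f (Measure.map ψ ν) := hmap ▸ hfaesm
  have htoNN : AEMeasurable (fun x => (g x).toNNReal) μ₀ :=
    measurable_real_toNNReal.comp_aemeasurable hgae
  calc (∫ x in Icc (0:ℝ) 1, srvIntegrand d (g x • c₁' (φ x)) (g x • c₂' (φ x)))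
      = ∫ x, (g x).toNNReal • f (ψ x) ∂μ₀ := by
        refine integral_congr_ae ?_
        filter_upwards [hg0, ae_restrict_mem hIcc] with x hx hmem
        rw [← hψφ x hmem] at *
        rw [srvIntegrand_smul d hx, NNReal.smul_def, Real.coe_toNNReal _ hx]
        simp [hfdef, smul_eq_mul]
    _ = ∫ x, f (ψ x) ∂ν := by
        rw [hν]
        exact (integral_withDensity_eq_integral_smul₀ htoNN (fun x => f (ψ x))).symm
    _ = ∫ y, f y ∂(Measure.map ψ ν) := (integral_map hψcont.aemeasurable hfaesm').symm
    _ = ∫ x in Icc (0:ℝ) 1, srvIntegrand d (c₁' x) (c₂' x) := by rw [hmap]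
end

section
/- Let U be a Borel set, ν ∈ M₊(U) a nonzero positive finite Radon measure, g: U → ℝ_{≥0} a Borel function with ∫_U g dν > 0. If μ ∈ M₊(U) with μ(U) = 1 maximizes F(μ) = ∫_U g(x) √( (dμ/d(μ+ν)) · (dν/d(μ+ν)) ) d(μ+ν) over all positive measures of total mass 1, then μ is absolutely continuous with respect to ν. -/
open MeasureTheory Set
open scoped ENNReal

lemma sqrt_add_le' (a b : ℝ) (ha : 0 ≤ a) (hb : 0 ≤ b) :
    Real.sqrt (a + b) ≤ Real.sqrt a + Real.sqrt b := by
  have h : a + b ≤ (Real.sqrt a + Real.sqrt b) ^ 2 := by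
    nlinarith [Real.sq_sqrt ha, Real.sq_sqrt hb, Real.sqrt_nonneg a, Real.sqrt_nonneg b]
  calc Real.sqrt (a + b) ≤ Real.sqrt ((Real.sqrt a + Real.sqrt b) ^ 2) := Real.sqrt_le_sqrt h
    _ = Real.sqrt a + Real.sqrt b := Real.sqrt_sq (by positivity)

/-- Key change-of-measure identity in `lintegral` form. -/
lemma bhat_lintegral_eq {α : Type*} [MeasurableSpace α]
    (μ ν : Measure α) [IsFiniteMeasure μ] [IsFiniteMeasure ν]
    (g : α → ℝ) (hgm : Measurable g) (hg0 : ∀ x, 0 ≤ g x) :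
    ∫⁻ x, ENNReal.ofReal (g x * Real.sqrt ((μ.rnDeriv (μ + ν) x).toReal *
        (ν.rnDeriv (μ + ν) x).toReal)) ∂(μ + ν)
      = ∫⁻ x, ENNReal.ofReal (g x * Real.sqrt ((μ.rnDeriv ν x).toReal)) ∂ν := by
  obtain ⟨S, hSm, hξS, hνSc⟩ := μ.mutuallySingular_singularPart ν
  set ξ := μ.singularPart ν with hξdef
  set B := Sᶜ with hBdef
  have hBm : MeasurableSet B := hSm.compl
  have hνB : ν B = 0 := hνSc
  have hξBc : ξ Bᶜ = 0 := by rwa [hBdef, compl_compl]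
  set f := μ.rnDeriv ν with hfdef
  have hfm : Measurable f := μ.measurable_rnDeriv ν
  have hflt : ∀ᵐ x ∂ν, f x < ⊤ := μ.rnDeriv_lt_top ν
  set q : α → ℝ≥0∞ := Bᶜ.indicator (fun x => (f x + 1)⁻¹) with hqdef
  set p : α → ℝ≥0∞ := B.indicator 1 + Bᶜ.indicator (fun x => f x * (f x + 1)⁻¹) with hpdef
  have hqm : Measurable q := ((hfm.add measurable_const).inv).indicator hBm.compl
  have hpm : Measurable p :=
    (measurable_one.indicator hBm).add ((hfm.mul (hfm.add measurable_const).inv).indicator hBm.compl)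
  have hdecomp : ξ + ν.withDensity f = μ := μ.singularPart_add_rnDeriv ν
  -- ν B = 0 gives: a.e. ν, x ∈ Bᶜ
  have haeν : ∀ᵐ x ∂ν, x ∈ Bᶜ := by
    rw [MeasureTheory.ae_iff]; simpa using hνB
  have haeξ : ∀ᵐ x ∂ξ, x ∈ B := by
    rw [MeasureTheory.ae_iff]; exact hξBc
  have hμν : μ + ν = ξ + ν.withDensity f + ν := by rw [hdecomp]
  -- compute ν.rnDeriv (μ+ν)
  have hq_eq : q =ᵐ[μ + ν] ν.rnDeriv (μ + ν) := by
    refine Measure.eq_rnDeriv hqm Measure.MutuallySingular.zero_left ?_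
    rw [zero_add, hμν, withDensity_add_measure, withDensity_add_measure,
      ← withDensity_mul ν hfm hqm]
    have h1 : ξ.withDensity q = 0 := by
      rw [← withDensity_zero (μ := ξ)]
      apply withDensity_congr_ae
      filter_upwards [haeξ] with x hx
      simp [hqdef, indicator_of_notMem (by simpa using hx : x ∉ Bᶜ)]
    have h2 : ν.withDensity (f * q) = 0 →  True := fun _ => trivial
    have h3 : ν.withDensity (f * q) + ν.withDensity q = ν.withDensity ((f + 1) * q) := by
      rw [← withDensity_add_right _ hqm]
      congr 1
      ext x
      simp [add_mul]
    have h4 : ν.withDensity ((f + 1) * q) = ν := by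
      conv_rhs => rw [← withDensity_one (μ := ν)]
      apply withDensity_congr_ae
      filter_upwards [haeν, hflt] with x hx hfx
      have : q x = (f x + 1)⁻¹ := by rw [hqdef]; exact indicator_of_mem hx _
      rw [Pi.mul_apply, Pi.add_apply, this, Pi.one_apply,
        ENNReal.mul_inv_cancel (by simp) (by simp [hfx.ne])]
    rw [add_assoc, h3, h4, h1, zero_add]
  -- compute μ.rnDeriv (μ+ν)
  have hp_eq : p =ᵐ[μ + ν] μ.rnDeriv (μ + ν) := by
    refine Measure.eq_rnDeriv hpm Measure.MutuallySingular.zero_left ?_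
    rw [zero_add, hμν, withDensity_add_measure, withDensity_add_measure,
      ← withDensity_mul ν hfm hpm]
    have h1 : ξ.withDensity p = ξ := by
      conv_rhs => rw [← withDensity_one (μ := ξ)]
      apply withDensity_congr_ae
      filter_upwards [haeξ] with x hx
      simp [hpdef, indicator_of_mem hx, indicator_of_notMem (by simpa using hx : x ∉ Bᶜ)]
    have h3 : ν.withDensity (f * p) + ν.withDensity p = ν.withDensity ((f + 1) * p) := by
      rw [← withDensity_add_right _ hpm]
      congr 1; ext x; simp [add_mul]
    have h4 : ν.withDensity ((f + 1) * p) = ν.withDensity f := by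
      apply withDensity_congr_ae
      filter_upwards [haeν, hflt] with x hx hfx
      have hpx : p x = f x * (f x + 1)⁻¹ := by
        rw [hpdef]
        simp [indicator_of_mem hx, indicator_of_notMem (show x ∉ B by simpa using hx)]
      rw [Pi.mul_apply, Pi.add_apply, hpx, Pi.one_apply, ← mul_assoc,
        mul_comm (f x + 1) (f x), mul_assoc,
        ENNReal.mul_inv_cancel (by simp) (by simp [hfx.ne]), mul_one]
    rw [add_assoc, h3, h4, h1]
    exact hdecomp.symm
  -- now rewrite the LHS integrand using p and q
  set h : α → ℝ≥0∞ := fun x => ENNReal.ofReal (g x * Real.sqrt ((p x).toReal * (q x).toReal))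
    with hhdef
  have step1 : ∫⁻ x, ENNReal.ofReal (g x * Real.sqrt ((μ.rnDeriv (μ + ν) x).toReal *
      (ν.rnDeriv (μ + ν) x).toReal)) ∂(μ + ν) = ∫⁻ x, h x ∂(μ + ν) := by
    apply lintegral_congr_ae
    filter_upwards [hp_eq, hq_eq] with x hpx hqx
    rw [hhdef, ← hpx, ← hqx]
  rw [step1, hμν, lintegral_add_measure, lintegral_add_measure]
  have hhm : Measurable h :=
    (hgm.mul (hpm.ennreal_toReal.mul hqm.ennreal_toReal).sqrt).ennreal_ofReal
  -- the ξ part vanishes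
  have hξ_zero : ∫⁻ x, h x ∂ξ = 0 := by
    rw [← lintegral_zero (μ := ξ)]
    apply lintegral_congr_ae
    filter_upwards [haeξ] with x hx
    have : q x = 0 := indicator_of_notMem (by simpa using hx) _
    simp [hhdef, this]
  rw [hξ_zero, zero_add, lintegral_withDensity_eq_lintegral_mul ν hfm hhm]
  simp only [Pi.mul_apply]
  rw [← lintegral_add_left (f := fun a => f a * h a) (hfm.mul hhm)]
  -- pointwise identity on Bᶜ with f finite
  apply lintegral_congr_ae
  filter_upwards [haeν, hflt] with x hx hfx
  have hqx : q x = (f x + 1)⁻¹ := indicator_of_mem hx _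
  have hpx : p x = f x * (f x + 1)⁻¹ := by
    rw [hpdef]
    simp [indicator_of_mem hx, indicator_of_notMem (show x ∉ B by simpa using hx)]
  set a : ℝ := (f x).toReal with hadef
  have ha : 0 ≤ a := ENNReal.toReal_nonneg
  have hfx1 : f x + 1 ≠ ⊤ := by simp [hfx.ne]
  have ht1 : (f x + 1).toReal = a + 1 := by
    rw [ENNReal.toReal_add hfx.ne (by simp)]; simp [hadef]
  have ha1 : (0:ℝ) < a + 1 := by linarith
  have hpq : (p x).toReal * (q x).toReal = (Real.sqrt a / (a + 1)) ^ 2 := by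
    rw [hpx, hqx, ENNReal.toReal_mul, ENNReal.toReal_inv, ht1, ← hadef,
      div_pow, Real.sq_sqrt ha]
    field_simp
  have hsq : Real.sqrt ((p x).toReal * (q x).toReal) = Real.sqrt a / (a + 1) := by
    rw [hpq, Real.sqrt_sq (by positivity)]
  have hfx_of : f x + 1 = ENNReal.ofReal (a + 1) := by
    rw [← ht1, ENNReal.ofReal_toReal hfx1]
  calc (f x * h x + h x)
      = (f x + 1) * h x := by ring
    _ = ENNReal.ofReal (a + 1) * ENNReal.ofReal (g x * (Real.sqrt a / (a + 1))) := by
        rw [hfx_of]; simp only [hhdef]; rw [hsq]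
    _ = ENNReal.ofReal ((a + 1) * (g x * (Real.sqrt a / (a + 1)))) := by
        rw [← ENNReal.ofReal_mul (by positivity : (0:ℝ) ≤ a + 1)]
    _ = ENNReal.ofReal (g x * Real.sqrt a) := by
        congr 1
        field_simp

/-- The Bhattacharyya-type functional
`F(μ) = ∫ g(x) √((dμ/d(μ+ν))·(dν/d(μ+ν))) d(μ+ν)`. -/
noncomputable def bhatFunctional {α : Type*} [MeasurableSpace α]
    (g : α → ℝ) (ν μ : Measure α) : ℝ :=
  ∫ x, g x * Real.sqrt ((μ.rnDeriv (μ + ν) x).toReal *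
    (ν.rnDeriv (μ + ν) x).toReal) ∂(μ + ν)

lemma bhat_eq_toReal {α : Type*} [MeasurableSpace α]
    (μ ν : Measure α) [IsFiniteMeasure μ] [IsFiniteMeasure ν]
    (g : α → ℝ) (hgm : Measurable g) (hg0 : ∀ x, 0 ≤ g x) :
    bhatFunctional g ν μ
      = (∫⁻ x, ENNReal.ofReal (g x * Real.sqrt ((μ.rnDeriv ν x).toReal)) ∂ν).toReal := by
  rw [← bhat_lintegral_eq μ ν g hgm hg0]
  unfold bhatFunctional
  rw [integral_eq_lintegral_of_nonneg_ae]
  · exact Filter.Eventually.of_forall fun x => mul_nonneg (hg0 x) (Real.sqrt_nonneg _)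
  · exact (hgm.mul (((μ.measurable_rnDeriv _).ennreal_toReal.mul
      (ν.measurable_rnDeriv _).ennreal_toReal)).sqrt).aestronglyMeasurable


/-- Let `ν` be a nonzero positive finite measure and `g ≥ 0` Borel with
`∫ g dν > 0`.  If `μ` with `μ(U) = 1` maximises
`F(μ) = ∫ g √((dμ/d(μ+ν))(dν/d(μ+ν))) d(μ+ν)` over all positive measures of total
mass `1`, then `μ ≪ ν`. -/
theorem maximiser_absolutely_continuous {α : Type*} [MeasurableSpace α]
    (ν : Measure α) [IsFiniteMeasure ν] (hν : ν ≠ 0)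
    (g : α → ℝ) (hgm : Measurable g) (hg0 : ∀ x, 0 ≤ g x)
    (hgpos : 0 < ∫ x, g x ∂ν)
    (μ : Measure α) [IsFiniteMeasure μ] (hμ1 : μ univ = 1)
    (hmax : ∀ μ' : Measure α, IsFiniteMeasure μ' → μ' univ = 1 →
      bhatFunctional g ν μ' ≤ bhatFunctional g ν μ) :
    μ ≪ ν := by
  -- g is integrable
  have hgint : Integrable g ν := by
    by_contra h
    rw [integral_undef h] at hgpos
    exact lt_irrefl 0 hgpos
  have hgl : ∫⁻ x, ENNReal.ofReal (g x) ∂ν ≠ ⊤ := by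
    have := hgint.2
    rw [hasFiniteIntegral_iff_ofReal (Filter.Eventually.of_forall hg0)] at this
    exact this.ne
  have hgl_pos : ∫⁻ x, ENNReal.ofReal (g x) ∂ν ≠ 0 := by
    intro h0
    rw [integral_eq_lintegral_of_nonneg_ae (Filter.Eventually.of_forall hg0)
      hgm.aestronglyMeasurable, h0] at hgpos
    simp at hgpos
  have hνu_pos : ν univ ≠ 0 := by simpa [Measure.measure_univ_eq_zero] using hν
  have hνu_fin : ν univ ≠ ⊤ := measure_ne_top ν univ
  by_contra hac
  set f := μ.rnDeriv ν with hfdef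
  have hfm : Measurable f := μ.measurable_rnDeriv ν
  have hflt : ∀ᵐ x ∂ν, f x < ⊤ := μ.rnDeriv_lt_top ν
  set L := ∫⁻ x, ENNReal.ofReal (g x * Real.sqrt ((f x).toReal)) ∂ν with hLdef
  have hFμ : bhatFunctional g ν μ = L.toReal := bhat_eq_toReal μ ν g hgm hg0
  by_cases hLtop : L = ⊤
  · -- use the competitor (ν univ)⁻¹ • ν
    set c : ℝ≥0∞ := (ν univ)⁻¹ with hcdef
    have hc_fin : c ≠ ⊤ := by simp [hcdef, hνu_pos]
    have hc_pos : c ≠ 0 := by simp [hcdef, hνu_fin]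
    set μ'' : Measure α := ν.withDensity (fun _ => c) with hμ''def
    have hμ''univ : μ'' univ = 1 := by
      rw [hμ''def, withDensity_apply _ MeasurableSet.univ, setLIntegral_const,
        hcdef, ENNReal.inv_mul_cancel hνu_pos hνu_fin]
    have hμ''fin : IsFiniteMeasure μ'' := ⟨by rw [hμ''univ]; exact ENNReal.one_lt_top⟩
    have hrd : μ''.rnDeriv ν =ᵐ[ν] fun _ => c :=
      Measure.rnDeriv_withDensity ν measurable_const
    have hF'' : bhatFunctional g ν μ''
        = ((∫⁻ x, ENNReal.ofReal (g x) ∂ν) * ENNReal.ofReal (Real.sqrt c.toReal)).toReal := by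
      rw [bhat_eq_toReal μ'' ν g hgm hg0]
      congr 1
      rw [← lintegral_mul_const _ hgm.ennreal_ofReal]
      apply lintegral_congr_ae
      filter_upwards [hrd] with x hx
      rw [hx, ← ENNReal.ofReal_mul (hg0 x)]
    have hcr_pos : 0 < Real.sqrt c.toReal := by
      apply Real.sqrt_pos.mpr
      exact ENNReal.toReal_pos hc_pos hc_fin
    have hpos : 0 < bhatFunctional g ν μ'' := by
      rw [hF'']
      apply ENNReal.toReal_pos
      · exact mul_ne_zero hgl_pos (ENNReal.ofReal_pos.mpr hcr_pos).ne'
      · exact ENNReal.mul_ne_top hgl ENNReal.ofReal_ne_top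
    have := hmax μ'' hμ''fin hμ''univ
    rw [hFμ, hLtop] at this
    simp at this
    exact absurd (lt_of_lt_of_le hpos this) (lt_irrefl 0)
  · -- L finite: use the competitor μ' = μ_ac + t ν
    set ξ := μ.singularPart ν with hξdef
    have hξ0 : ξ ≠ 0 := fun h => hac ((Measure.singularPart_eq_zero μ ν).mp h)
    set s := ξ univ with hsdef
    have hs_pos : s ≠ 0 := by simpa [hsdef, Measure.measure_univ_eq_zero] using hξ0
    have hs_le : s ≤ 1 := by
      rw [hsdef, ← hμ1]; exact (μ.singularPart_le ν) univ
    have hs_fin : s ≠ ⊤ := (lt_of_le_of_lt hs_le ENNReal.one_lt_top).ne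
    set t : ℝ≥0∞ := s / ν univ with htdef
    have ht_pos : t ≠ 0 := by
      simp [htdef, ENNReal.div_eq_zero_iff, hs_pos, hνu_fin]
    have ht_fin : t ≠ ⊤ := by
      simp [htdef, ENNReal.div_eq_top, hs_pos, hs_fin, hνu_pos]
    have htr_pos : 0 < t.toReal := ENNReal.toReal_pos ht_pos ht_fin
    set μ' : Measure α := ν.withDensity (fun x => f x + t) with hμ'def
    have hdecomp : ξ + ν.withDensity f = μ := μ.singularPart_add_rnDeriv ν
    have hμ'univ : μ' univ = 1 := by
      have h1 : μ' univ = (∫⁻ x, f x ∂ν) + t * ν univ := by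
        rw [hμ'def, withDensity_apply _ MeasurableSet.univ, Measure.restrict_univ,
          lintegral_add_right _ measurable_const, lintegral_const]
      have h3 : ∫⁻ x, f x ∂ν = ν.withDensity f univ := by
        rw [withDensity_apply _ MeasurableSet.univ, Measure.restrict_univ]
      have h2 := congrArg (fun m : Measure α => m univ) hdecomp
      simp only [Measure.coe_add, Pi.add_apply] at h2
      rw [hμ1] at h2
      rw [h1, htdef, ENNReal.div_mul_cancel hνu_pos hνu_fin, h3, hsdef, add_comm]
      exact h2
    have hμ'fin : IsFiniteMeasure μ' := ⟨by rw [hμ'univ]; exact ENNReal.one_lt_top⟩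
    have hrd' : μ'.rnDeriv ν =ᵐ[ν] fun x => f x + t :=
      Measure.rnDeriv_withDensity ν (hfm.add measurable_const)
    -- real-valued integrands
    set φ : α → ℝ := fun x => g x * Real.sqrt ((f x).toReal) with hφdef
    set φ' : α → ℝ := fun x => g x * Real.sqrt ((f x).toReal + t.toReal) with hφ'def
    have hφm : Measurable φ := hgm.mul hfm.ennreal_toReal.sqrt
    have hφ'm : Measurable φ' :=
      hgm.mul (hfm.ennreal_toReal.add measurable_const).sqrt
    have hφ0 : ∀ x, 0 ≤ φ x := fun x => mul_nonneg (hg0 x) (Real.sqrt_nonneg _)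
    have hφ'0 : ∀ x, 0 ≤ φ' x := fun x => mul_nonneg (hg0 x) (Real.sqrt_nonneg _)
    set L' := ∫⁻ x, ENNReal.ofReal (φ' x) ∂ν with hL'def
    have hFμ' : bhatFunctional g ν μ' = L'.toReal := by
      rw [bhat_eq_toReal μ' ν g hgm hg0, hL'def]
      congr 1
      apply lintegral_congr_ae
      filter_upwards [hrd', hflt] with x hx hfx
      rw [hx, ENNReal.toReal_add hfx.ne ht_fin]
    have hL'fin : L' ≠ ⊤ := by
      have hbound : ∀ x, ENNReal.ofReal (φ' x)
          ≤ ENNReal.ofReal (φ x) + ENNReal.ofReal (g x * Real.sqrt t.toReal) := by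
        intro x
        calc ENNReal.ofReal (φ' x)
            ≤ ENNReal.ofReal (φ x + g x * Real.sqrt t.toReal) := by
              apply ENNReal.ofReal_le_ofReal
              rw [hφ'def, hφdef]
              calc g x * Real.sqrt ((f x).toReal + t.toReal)
                  ≤ g x * (Real.sqrt ((f x).toReal) + Real.sqrt t.toReal) := by
                    apply mul_le_mul_of_nonneg_left _ (hg0 x)
                    exact sqrt_add_le' _ _ ENNReal.toReal_nonneg ENNReal.toReal_nonneg
                _ = g x * Real.sqrt ((f x).toReal) + g x * Real.sqrt t.toReal := by ring
          _ ≤ ENNReal.ofReal (φ x) + ENNReal.ofReal (g x * Real.sqrt t.toReal) :=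
              ENNReal.ofReal_add_le
      have h2 : ∫⁻ x, ENNReal.ofReal (g x * Real.sqrt t.toReal) ∂ν ≠ ⊤ := by
        have : ∀ x, ENNReal.ofReal (g x * Real.sqrt t.toReal)
            = ENNReal.ofReal (g x) * ENNReal.ofReal (Real.sqrt t.toReal) := fun x =>
          ENNReal.ofReal_mul (hg0 x)
        rw [lintegral_congr this, lintegral_mul_const _ hgm.ennreal_ofReal]
        exact ENNReal.mul_ne_top hgl ENNReal.ofReal_ne_top
      refine ne_top_of_le_ne_top ?_ (lintegral_mono hbound)
      rw [lintegral_add_left hφm.ennreal_ofReal]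
      exact ENNReal.add_ne_top.mpr ⟨hLtop, h2⟩
    -- integrability
    have hφint : Integrable φ ν := by
      refine ⟨hφm.aestronglyMeasurable,
        (hasFiniteIntegral_iff_ofReal (Filter.Eventually.of_forall hφ0)).mpr ?_⟩
      exact Ne.lt_top hLtop
    have hφ'int : Integrable φ' ν := by
      refine ⟨hφ'm.aestronglyMeasurable,
        (hasFiniteIntegral_iff_ofReal (Filter.Eventually.of_forall hφ'0)).mpr ?_⟩
      exact Ne.lt_top hL'fin
    have hFμeq : bhatFunctional g ν μ = ∫ x, φ x ∂ν := by
      rw [hFμ, integral_eq_lintegral_of_nonneg_ae (Filter.Eventually.of_forall hφ0)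
        hφm.aestronglyMeasurable]
    have hFμ'eq : bhatFunctional g ν μ' = ∫ x, φ' x ∂ν := by
      rw [hFμ', integral_eq_lintegral_of_nonneg_ae (Filter.Eventually.of_forall hφ'0)
        hφ'm.aestronglyMeasurable]
    -- strict inequality
    have hgsupp : 0 < ν {x | 0 < g x} := by
      rw [pos_iff_ne_zero]
      intro h0
      have hg_ae : g =ᵐ[ν] 0 := by
        rw [Filter.EventuallyEq, ae_iff]
        have : {x | ¬ g x = 0} ⊆ {x | 0 < g x} := fun x hx =>
          lt_of_le_of_ne (hg0 x) (Ne.symm hx)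
        exact measure_mono_null (by simpa using this) h0
      rw [integral_congr_ae hg_ae] at hgpos
      simp at hgpos
    have hψ0 : ∀ x, 0 ≤ φ' x - φ x := by
      intro x
      have h1 : Real.sqrt ((f x).toReal) ≤ Real.sqrt ((f x).toReal + t.toReal) :=
        Real.sqrt_le_sqrt (by linarith [htr_pos.le])
      have := mul_le_mul_of_nonneg_left h1 (hg0 x)
      simp only [hφdef, hφ'def]
      linarith
    have hdiff_pos : 0 < ∫ x, (φ' x - φ x) ∂ν := by
      refine (integral_pos_iff_support_of_nonneg hψ0 (hφ'int.sub hφint)).mpr ?_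
      refine lt_of_lt_of_le hgsupp (measure_mono ?_)
      intro x hx
      have hxg : 0 < g x := hx
      have hlt : Real.sqrt ((f x).toReal) < Real.sqrt ((f x).toReal + t.toReal) :=
        Real.sqrt_lt_sqrt ENNReal.toReal_nonneg (by linarith)
      have hpos : 0 < φ' x - φ x := by
        have heq : φ' x - φ x
            = g x * (Real.sqrt ((f x).toReal + t.toReal) - Real.sqrt ((f x).toReal)) := by
          simp only [hφdef, hφ'def]; ring
        rw [heq]
        exact mul_pos hxg (by linarith)
      exact Function.mem_support.mpr hpos.ne'
    have hlt : bhatFunctional g ν μ < bhatFunctional g ν μ' := by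
      rw [hFμeq, hFμ'eq]
      have := integral_sub hφ'int hφint
      have h2 : ∫ x, (φ' x - φ x) ∂ν = ∫ x, φ' x ∂ν - ∫ x, φ x ∂ν := this
      linarith [hdiff_pos, h2]
    exact absurd (hmax μ' hμ'fin hμ'univ) (not_le.mpr hlt)
end

section
/- Let c ∈ BV([0,1]; ℝ^d) and φ ∈ Γ̄. If c is continuous or φ is injective, then the set [c,φ] = {g ∈ BV([0,1];ℝ^d) : g(x) ∈ [c^ℓ(φ(x)), c^r(φ(x))] for all x, and len(g) = len(c)} consists of the single element c ∘ φ. -/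
open MeasureTheory Set Filter
open scoped ENNReal

/-- A good representative of a BV curve `[0,1] → ℝ^d`, together with one-sided limits. -/
structure GoodBV (d : ℕ) where
  c : ℝ → EuclideanSpace ℝ (Fin d)
  cl : ℝ → EuclideanSpace ℝ (Fin d)
  cr : ℝ → EuclideanSpace ℝ (Fin d)
  bv : BoundedVariationOn c (Set.Icc 0 1)
  left : ∀ x ∈ Set.Ioc (0:ℝ) 1,
    Filter.Tendsto c (nhdsWithin x (Set.Ico 0 x)) (nhds (cl x))
  right : ∀ x ∈ Set.Ico (0:ℝ) 1,
    Filter.Tendsto c (nhdsWithin x (Set.Ioc x 1)) (nhds (cr x))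
  l0 : cl 0 = c 0
  r1 : cr 1 = c 1
  good : ∀ x ∈ Set.Icc (0:ℝ) 1, c x ∈ segment ℝ (cl x) (cr x)

/-- Let `c ∈ BV([0,1];ℝ^d)` (good representative) and `φ ∈ Γ̄`.  If `c`
is continuous or `φ` is injective, then the set
`[c,φ] = {g : g(x) ∈ [c^ℓ(φ(x)), c^r(φ(x))] ∀x, len(g) = len(c)}` consists of the
single element `c ∘ φ` (as a curve on `[0,1]`, up to the usual identification of BV
functions agreeing almost everywhere): `c ∘ φ ∈ [c,φ]` and every `g ∈ [c,φ]` agrees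
a.e. on `[0,1]` with `c ∘ φ`. -/
theorem reparam_set_singleton (d : ℕ)
    (C : GoodBV d) (φ ψ : ℝ → ℝ)
    (hψint : IntegrableOn ψ (Icc (0:ℝ) 1))
    (hψ0 : ∀ᵐ t ∂(volume.restrict (Icc (0:ℝ) 1)), 0 ≤ ψ t)
    (hφ : ∀ t ∈ Icc (0:ℝ) 1, φ t = ∫ s in (0:ℝ)..t, ψ s)
    (hφ1 : φ 1 = 1)
    (hcase : ContinuousOn C.c (Icc (0:ℝ) 1) ∨ InjOn φ (Icc (0:ℝ) 1)) :
    ((∀ t ∈ Icc (0:ℝ) 1, C.c (φ t) ∈ segment ℝ (C.cl (φ t)) (C.cr (φ t))) ∧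
      eVariationOn (fun t => C.c (φ t)) (Icc (0:ℝ) 1) = eVariationOn C.c (Icc (0:ℝ) 1)) ∧
    ∀ g : ℝ → EuclideanSpace ℝ (Fin d),
      BoundedVariationOn g (Icc (0:ℝ) 1) →
      (∀ t ∈ Icc (0:ℝ) 1, g t ∈ segment ℝ (C.cl (φ t)) (C.cr (φ t))) →
      eVariationOn g (Icc (0:ℝ) 1) = eVariationOn C.c (Icc (0:ℝ) 1) →
      g =ᵐ[volume.restrict (Icc (0:ℝ) 1)] fun t => C.c (φ t) := by
  have h01 : (0:ℝ) ≤ 1 := zero_le_one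
  have hIcc0 : (0:ℝ) ∈ Icc (0:ℝ) 1 := ⟨le_rfl, h01⟩
  have hIcc1 : (1:ℝ) ∈ Icc (0:ℝ) 1 := ⟨h01, le_rfl⟩
  have hφ0 : φ 0 = 0 := by rw [hφ 0 hIcc0, intervalIntegral.integral_same]
  have hint : ∀ x y : ℝ, x ∈ Icc (0:ℝ) 1 → y ∈ Icc (0:ℝ) 1 →
      IntervalIntegrable ψ volume x y := fun x y hx hy =>
    (hψint.mono_set (uIcc_subset_Icc hx hy)).intervalIntegrable
  have hmono : MonotoneOn φ (Icc 0 1) := by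
    intro a ha b hb hab
    have h1 : φ a + ∫ s in a..b, ψ s = φ b := by
      rw [hφ a ha, hφ b hb]
      exact intervalIntegral.integral_add_adjacent_intervals (hint 0 a hIcc0 ha)
        (hint a b ha hb)
    have h2 : 0 ≤ ∫ s in a..b, ψ s := by
      apply intervalIntegral.integral_nonneg_of_ae_restrict hab
      exact ae_restrict_of_ae_restrict_of_subset (Icc_subset_Icc ha.1 hb.2) hψ0
    linarith
  have hmaps : ∀ t ∈ Icc (0:ℝ) 1, φ t ∈ Icc (0:ℝ) 1 := by
    intro t ht
    constructor
    · rw [← hφ0]; exact hmono hIcc0 ht ht.1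
    · rw [← hφ1]; exact hmono ht hIcc1 ht.2
  have hφcont : ContinuousOn φ (Icc 0 1) := by
    have h := intervalIntegral.continuousOn_primitive_interval
      (μ := volume) (a := (0:ℝ)) (b := 1) (f := ψ) (by rwa [uIcc_of_le h01])
    rw [uIcc_of_le h01] at h
    exact h.congr hφ
  have himg : φ '' Icc 0 1 = Icc 0 1 := by
    apply Subset.antisymm
    · rintro _ ⟨t, ht, rfl⟩; exact hmaps t ht
    · have h := intermediate_value_Icc h01 hφcont
      rwa [hφ0, hφ1] at h
  have hvar : eVariationOn (fun t => C.c (φ t)) (Icc (0:ℝ) 1)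
      = eVariationOn C.c (Icc (0:ℝ) 1) := by
    have h := eVariationOn.comp_eq_of_monotoneOn C.c φ hmono
    rw [himg] at h
    exact h
  refine ⟨⟨fun t ht => C.good (φ t) (hmaps t ht), hvar⟩, ?_⟩
  intro g _hgbv hgseg _hgvar
  have hkey : ∃ B : Set ℝ, volume B = 0 ∧
      ∀ t ∈ Icc (0:ℝ) 1, t ∉ B → C.cl (φ t) = C.cr (φ t) := by
    rcases hcase with hcont | hinj
    · refine ⟨∅, measure_empty, fun t ht _ => ?_⟩
      set y := φ t with hy
      have hyI : y ∈ Icc (0:ℝ) 1 := hmaps t ht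
      have hcl : C.cl y = C.c y := by
        rcases eq_or_lt_of_le hyI.1 with h0 | h0
        · rw [← h0]; exact C.l0
        · have hne : (nhdsWithin y (Ico 0 y)).NeBot := by
            rw [← mem_closure_iff_nhdsWithin_neBot, closure_Ico (ne_of_lt h0)]
            exact ⟨h0.le, le_rfl⟩
          have t1 := C.left y ⟨h0, hyI.2⟩
          have t2 : Tendsto C.c (nhdsWithin y (Ico 0 y)) (nhds (C.c y)) :=
            (hcont y hyI).mono_left
              (nhdsWithin_mono y (fun u hu => ⟨hu.1, hu.2.le.trans hyI.2⟩))
          exact tendsto_nhds_unique t1 t2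
      have hcr : C.cr y = C.c y := by
        rcases eq_or_lt_of_le hyI.2 with h1 | h1
        · rw [h1]; exact C.r1
        · have hne : (nhdsWithin y (Ioc y 1)).NeBot := by
            rw [← mem_closure_iff_nhdsWithin_neBot, closure_Ioc (ne_of_lt h1)]
            exact ⟨le_rfl, h1.le⟩
          have t1 := C.right y ⟨hyI.1, h1⟩
          have t2 : Tendsto C.c (nhdsWithin y (Ioc y 1)) (nhds (C.c y)) :=
            (hcont y hyI).mono_left
              (nhdsWithin_mono y (fun u hu => ⟨hyI.1.trans hu.1.le, hu.2⟩))
          exact tendsto_nhds_unique t1 t2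
      rw [hcl, hcr]
    · have hlbv : LocallyBoundedVariationOn C.c (Icc 0 1) :=
        C.bv.locallyBoundedVariationOn
      have hclamp : ∀ y : ℝ, max 0 (min 1 y) ∈ Icc (0:ℝ) 1 := fun y =>
        ⟨le_max_left _ _, max_le h01 (min_le_left _ _)⟩
      set V : ℝ → ℝ :=
        fun y => variationOnFromTo C.c (Icc 0 1) 0 (max 0 (min 1 y)) with hV
      have hVmono : Monotone V := fun a b hab =>
        (variationOnFromTo.monotoneOn hlbv hIcc0) (hclamp a) (hclamp b)
          (max_le_max le_rfl (min_le_min le_rfl hab))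
      have hVeq : ∀ y ∈ Icc (0:ℝ) 1, V y = variationOnFromTo C.c (Icc 0 1) 0 y := by
        intro y hy
        rw [hV]
        simp [min_eq_right hy.2, max_eq_right hy.1]
      have hDcnt : Set.Countable {y : ℝ | ¬ContinuousAt V y} :=
        hVmono.countable_not_continuousAt
      set D : Set ℝ := insert 0 (insert 1 {y : ℝ | ¬ContinuousAt V y}) with hD'
      have hDc : D.Countable := (hDcnt.insert 1).insert 0
      set B : Set ℝ := Icc 0 1 ∩ φ ⁻¹' D with hB'
      have hBc : B.Countable := by
        have hsub : B ⊆ ⋃ y ∈ D, (Icc (0:ℝ) 1 ∩ φ ⁻¹' {y}) := by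
          rintro t ⟨ht, hty⟩
          exact mem_biUnion hty ⟨ht, rfl⟩
        apply Set.Countable.mono hsub
        apply hDc.biUnion
        intro y _
        apply Set.Subsingleton.countable
        rintro a ⟨ha, (ha' : φ a = y)⟩ b ⟨hb, (hb' : φ b = y)⟩
        exact hinj ha hb (ha'.trans hb'.symm)
      refine ⟨B, hBc.measure_zero _, ?_⟩
      intro t ht htB
      have hyD : φ t ∉ D := fun h => htB ⟨ht, h⟩
      set y := φ t with hy
      have hyI : y ∈ Icc (0:ℝ) 1 := hmaps t ht
      simp only [hD', mem_insert_iff, mem_setOf_eq, not_or, not_not] at hyD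
      obtain ⟨hy0, hy1, hyC⟩ := hyD
      have hy0' : 0 < y := lt_of_le_of_ne hyI.1 (Ne.symm hy0)
      have hy1' : y < 1 := lt_of_le_of_ne hyI.2 hy1
      have hneL : (nhdsWithin y (Ico 0 y)).NeBot := by
        rw [← mem_closure_iff_nhdsWithin_neBot, closure_Ico (ne_of_lt hy0')]
        exact ⟨hy0'.le, le_rfl⟩
      have hneR : (nhdsWithin y (Ioc y 1)).NeBot := by
        rw [← mem_closure_iff_nhdsWithin_neBot, closure_Ioc (ne_of_lt hy1')]
        exact ⟨le_rfl, hy1'.le⟩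
      have hlne : ((nhdsWithin y (Ico 0 y)) ×ˢ (nhdsWithin y (Ioc y 1))).NeBot :=
        Filter.prod_neBot.2 ⟨hneL, hneR⟩
      have tdist : Tendsto (fun p : ℝ × ℝ => dist (C.c p.1) (C.c p.2))
          ((nhdsWithin y (Ico 0 y)) ×ˢ (nhdsWithin y (Ioc y 1)))
          (nhds (dist (C.cl y) (C.cr y))) :=
        Filter.Tendsto.dist ((C.left y ⟨hy0', hyI.2⟩).comp tendsto_fst)
          ((C.right y ⟨hyI.1, hy1'⟩).comp tendsto_snd)
      have tV : Tendsto (fun p : ℝ × ℝ => V p.2 - V p.1)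
          ((nhdsWithin y (Ico 0 y)) ×ˢ (nhdsWithin y (Ioc y 1))) (nhds 0) := by
        have h2 : Tendsto (fun p : ℝ × ℝ => V p.2)
            ((nhdsWithin y (Ico 0 y)) ×ˢ (nhdsWithin y (Ioc y 1))) (nhds (V y)) :=
          (hyC.tendsto.mono_left nhdsWithin_le_nhds).comp tendsto_snd
        have h1 : Tendsto (fun p : ℝ × ℝ => V p.1)
            ((nhdsWithin y (Ico 0 y)) ×ˢ (nhdsWithin y (Ioc y 1))) (nhds (V y)) :=
          (hyC.tendsto.mono_left nhdsWithin_le_nhds).comp tendsto_fst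
        simpa using h2.sub h1
      have key : dist (C.cl y) (C.cr y) ≤ 0 := by
        apply le_of_tendsto_of_tendsto tdist tV
        apply Filter.eventually_of_mem
          (Filter.prod_mem_prod self_mem_nhdsWithin self_mem_nhdsWithin)
        rintro ⟨u, s⟩ ⟨hu, hs⟩
        have huI : u ∈ Icc (0:ℝ) 1 := ⟨hu.1, (hu.2.trans hy1').le⟩
        have hsI : s ∈ Icc (0:ℝ) 1 := ⟨(hy0'.trans hs.1).le, hs.2⟩
        have hus : u ≤ s := hu.2.le.trans hs.1.le
        have hd : dist (C.c u) (C.c s) ≤ variationOnFromTo C.c (Icc 0 1) u s := by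
          rw [variationOnFromTo.eq_of_le C.c (Icc 0 1) hus, dist_edist]
          apply ENNReal.toReal_mono (hlbv u s huI hsI)
          exact eVariationOn.edist_le C.c ⟨huI, le_rfl, hus⟩ ⟨hsI, hus, le_rfl⟩
        have hadd := variationOnFromTo.add hlbv hIcc0 huI hsI
        show dist (C.c u) (C.c s) ≤ V s - V u
        rw [hVeq s hsI, hVeq u huI]
        linarith
      rw [← dist_le_zero]
      exact key
  obtain ⟨B, hBnull, hB⟩ := hkey
  have hae : ∀ᵐ t ∂(volume.restrict (Icc (0:ℝ) 1)), t ∉ B :=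
    ae_restrict_of_ae (measure_eq_zero_iff_ae_notMem.mp hBnull)
  filter_upwards [ae_restrict_mem measurableSet_Icc, hae] with t ht htB
  have hseg := hgseg t ht
  have hgood := C.good (φ t) (hmaps t ht)
  rw [hB t ht htB, segment_same, mem_singleton_iff] at hseg hgood
  rw [hseg, hgood]
end

section
/- Let φ₁, φ₂ ∈ Γ̄. Then there exist ψ ∈ Γ̄ and γ₁, γ₂ ∈ Γ̄ with γ₁'(x) + γ₂'(x) = 2 for a.e. x ∈ [0,1] (so each γᵢ is 2-Lipschitz), such that φᵢ = γᵢ ∘ ψ for i = 1,2. -/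
open MeasureTheory Set

open scoped ENNReal

/-- For a continuous monotone `γ` with `γ 0 = 0` such that `2*y - γ y` is also monotone,
there is a density `h'` with values in `[0,2]` a.e. realizing both `γ` and `2*y - γ y`
as primitives. -/
lemma pair_density (γ : ℝ → ℝ) (hmono : Monotone γ) (hmono2 : Monotone (fun y => 2*y - γ y))
    (hcont : Continuous γ) (h0 : γ 0 = 0) :
    ∃ h' : ℝ → ℝ, IntegrableOn h' (Icc (0:ℝ) 1) ∧
      IntegrableOn (fun y => 2 - h' y) (Icc (0:ℝ) 1) ∧
      (∀ᵐ y ∂(volume.restrict (Icc (0:ℝ) 1)), 0 ≤ h' y ∧ h' y ≤ 2) ∧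
      (∀ y ∈ Icc (0:ℝ) 1, γ y = ∫ t in (0:ℝ)..y, h' t) ∧
      (∀ y ∈ Icc (0:ℝ) 1, 2*y - γ y = ∫ t in (0:ℝ)..y, (2 - h' t)) := by
  set G : ℝ → ℝ := fun y => 2*y - γ y with hG
  have hcont2 : Continuous G := by continuity
  set F₁ : StieltjesFunction ℝ := ⟨γ, hmono, fun x => hcont.continuousWithinAt⟩ with hF₁
  set F₂ : StieltjesFunction ℝ := ⟨G, hmono2, fun x => hcont2.continuousWithinAt⟩ with hF₂
  set μ₁ := F₁.measure
  set μ₂ := F₂.measure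
  have key : μ₁ + μ₂ = (2:ℝ≥0∞) • volume := by
    haveI : IsLocallyFiniteMeasure (μ₁ + μ₂) := by
      constructor
      intro x
      obtain ⟨s, hs, hμs⟩ := μ₁.finiteAt_nhds x
      obtain ⟨t, ht, hμt⟩ := μ₂.finiteAt_nhds x
      refine ⟨s ∩ t, Filter.inter_mem hs ht, ?_⟩
      rw [Measure.add_apply]
      exact ENNReal.add_lt_top.2 ⟨lt_of_le_of_lt (measure_mono inter_subset_left) hμs,
        lt_of_le_of_lt (measure_mono inter_subset_right) hμt⟩
    refine Measure.ext_of_Ioc _ _ fun a b hab => ?_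
    rw [Measure.add_apply, StieltjesFunction.measure_Ioc, StieltjesFunction.measure_Ioc,
      Measure.smul_apply, Real.volume_Ioc, smul_eq_mul,
      ← ENNReal.ofReal_add (sub_nonneg.2 (hmono hab.le)) (sub_nonneg.2 (hmono2 hab.le)),
      ← ENNReal.ofReal_ofNat, ← ENNReal.ofReal_mul (by norm_num)]
    congr 1
    show (γ b - γ a) + ((2*b - γ b) - (2*a - γ a)) = 2 * (b - a)
    ring
  have hle1 : μ₁ ≤ (2:ℝ≥0∞) • volume := key ▸ Measure.le_add_right le_rfl
  have hle2 : μ₂ ≤ (2:ℝ≥0∞) • volume := key ▸ Measure.le_add_left le_rfl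
  have hac1 : μ₁ ≪ (volume : Measure ℝ) := Measure.absolutelyContinuous_of_le_smul hle1
  have hac2 : μ₂ ≪ (volume : Measure ℝ) := Measure.absolutelyContinuous_of_le_smul hle2
  set r₁ := μ₁.rnDeriv volume with hr₁
  set r₂ := μ₂.rnDeriv volume with hr₂
  have hsum : ∀ᵐ y ∂(volume : Measure ℝ), r₁ y + r₂ y = 2 := by
    have hA := Measure.rnDeriv_add' μ₁ μ₂ volume
    rw [key] at hA
    have hB := Measure.rnDeriv_smul_left_of_ne_top' (volume : Measure ℝ) (volume : Measure ℝ)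
      (r := 2) (by norm_num)
    have hC := Measure.rnDeriv_self (volume : Measure ℝ)
    filter_upwards [hA, hB, hC] with y hy1 hy2 hy3
    have : r₁ y + r₂ y = ((2:ℝ≥0∞) • (volume : Measure ℝ)).rnDeriv volume y := hy1.symm
    rw [this, hy2]
    simp [hy3]
  have hsum' : ∀ᵐ y ∂(volume : Measure ℝ),
      (r₁ y).toReal + (r₂ y).toReal = 2 ∧ 0 ≤ (r₁ y).toReal ∧ (r₁ y).toReal ≤ 2 := by
    filter_upwards [hsum] with y hy
    have h1 : r₁ y ≠ ⊤ := by
      intro h; rw [h, top_add] at hy; exact ENNReal.ofNat_ne_top hy.symm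
    have h2 : r₂ y ≠ ⊤ := by
      intro h; rw [h, add_top] at hy; exact ENNReal.ofNat_ne_top hy.symm
    have hadd : (r₁ y).toReal + (r₂ y).toReal = 2 := by
      rw [← ENNReal.toReal_add h1 h2, hy]
      norm_num
    refine ⟨hadd, ENNReal.toReal_nonneg, ?_⟩
    nlinarith [ENNReal.toReal_nonneg (a := r₂ y)]
  have hmeas : Measurable fun y => (r₁ y).toReal :=
    (Measure.measurable_rnDeriv _ _).ennreal_toReal
  haveI : IsFiniteMeasure (volume.restrict (Icc (0:ℝ) 1)) := by
    constructor
    rw [Measure.restrict_apply_univ, Real.volume_Icc]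
    simp
  have hint1 : IntegrableOn (fun y => (r₁ y).toReal) (Icc (0:ℝ) 1) := by
    refine Integrable.mono' (integrable_const 2) hmeas.aestronglyMeasurable ?_
    filter_upwards [ae_restrict_of_ae hsum'] with y hy
    rw [Real.norm_eq_abs, abs_of_nonneg hy.2.1]
    exact hy.2.2
  have hint2 : IntegrableOn (fun y => 2 - (r₁ y).toReal) (Icc (0:ℝ) 1) := by
    refine Integrable.mono' (integrable_const 2) ?_ ?_
    · exact (measurable_const.sub hmeas).aestronglyMeasurable
    · filter_upwards [ae_restrict_of_ae hsum'] with y hy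
      rw [Real.norm_eq_abs, abs_of_nonneg (by linarith [hy.2.2])]
      linarith [hy.2.1]
  refine ⟨fun y => (r₁ y).toReal, hint1, hint2, ?_, ?_, ?_⟩
  · filter_upwards [ae_restrict_of_ae hsum'] with y hy
    exact ⟨hy.2.1, hy.2.2⟩
  · intro y hy
    rw [intervalIntegral.integral_of_le hy.1]
    rw [integral_toReal (Measure.measurable_rnDeriv _ _).aemeasurable
      (ae_restrict_of_ae (Measure.rnDeriv_lt_top μ₁ volume))]
    rw [← withDensity_apply _ measurableSet_Ioc, Measure.withDensity_rnDeriv_eq _ _ hac1]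
    have : μ₁ (Ioc 0 y) = ENNReal.ofReal (γ y - γ 0) := F₁.measure_Ioc 0 y
    rw [this, h0, sub_zero, ENNReal.toReal_ofReal (h0 ▸ hmono hy.1)]
  · intro y hy
    rw [intervalIntegral.integral_of_le hy.1]
    have hcongr : ∫ t in Ioc (0:ℝ) y, (2 - (r₁ t).toReal) = ∫ t in Ioc (0:ℝ) y, (r₂ t).toReal := by
      refine integral_congr_ae ?_
      filter_upwards [ae_restrict_of_ae hsum'] with t ht
      linarith [ht.1]
    rw [hcongr]
    rw [integral_toReal (Measure.measurable_rnDeriv _ _).aemeasurable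
      (ae_restrict_of_ae (Measure.rnDeriv_lt_top μ₂ volume))]
    rw [← withDensity_apply _ measurableSet_Ioc, Measure.withDensity_rnDeriv_eq _ _ hac2]
    have h20 : μ₂ (Ioc 0 y) = ENNReal.ofReal (G y - G 0) := F₂.measure_Ioc 0 y
    have hG0 : G 0 = 0 := by simp [hG, h0]
    rw [h20, hG0, sub_zero, ENNReal.toReal_ofReal (hG0 ▸ hmono2 hy.1)]

/-- `γ ∈ Γ̄` with density (a.e. derivative) `g`: `γ` is absolutely continuous on
`[0,1]` with `γ(x) = ∫₀ˣ g`, `g ≥ 0` a.e., `γ(0) = 0` and `γ(1) = 1`. -/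
def InGammaBar (γ g : ℝ → ℝ) : Prop :=
  IntegrableOn g (Set.Icc (0:ℝ) 1) ∧
  (∀ᵐ x ∂(volume.restrict (Set.Icc (0:ℝ) 1)), 0 ≤ g x) ∧
  (∀ x ∈ Set.Icc (0:ℝ) 1, γ x = ∫ t in (0:ℝ)..x, g t) ∧
  γ 1 = 1

/-- For `φ₁, φ₂ ∈ Γ̄` there exist `ψ ∈ Γ̄` and `γ₁, γ₂ ∈ Γ̄` with
`γ₁' + γ₂' = 2` a.e. (so each `γᵢ` is `2`-Lipschitz) such that `φᵢ = γᵢ ∘ ψ`. -/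
theorem reparam_factorisation (φ₁ φ₂ g₁ g₂ : ℝ → ℝ)
    (h₁ : InGammaBar φ₁ g₁) (h₂ : InGammaBar φ₂ g₂) :
    ∃ ψ gψ γ₁ γ₂ h₁' h₂' : ℝ → ℝ,
      InGammaBar ψ gψ ∧ InGammaBar γ₁ h₁' ∧ InGammaBar γ₂ h₂' ∧
      (∀ᵐ x ∂(volume.restrict (Icc (0:ℝ) 1)), h₁' x + h₂' x = 2) ∧
      (LipschitzOnWith 2 γ₁ (Icc (0:ℝ) 1)) ∧ (LipschitzOnWith 2 γ₂ (Icc (0:ℝ) 1)) ∧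
      (∀ x ∈ Icc (0:ℝ) 1, φ₁ x = γ₁ (ψ x)) ∧
      (∀ x ∈ Icc (0:ℝ) 1, φ₂ x = γ₂ (ψ x)) := by
  obtain ⟨hi₁, hpos₁, hfor₁, hone₁⟩ := h₁
  obtain ⟨hi₂, hpos₂, hfor₂, hone₂⟩ := h₂
  -- interval integrability on subintervals of [0,1]
  have hii : ∀ (g : ℝ → ℝ), IntegrableOn g (Icc (0:ℝ) 1) → ∀ a b : ℝ, a ∈ Icc (0:ℝ) 1 →
      b ∈ Icc (0:ℝ) 1 → IntervalIntegrable g volume a b := by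
    intro g hg a b ha hb
    rw [intervalIntegrable_iff]
    exact hg.mono_set (uIoc_subset_uIcc.trans (uIcc_subset_Icc ha hb))
  set gψ : ℝ → ℝ := fun t => (g₁ t + g₂ t)/2 with hgψ
  set ψ : ℝ → ℝ := fun x => ∫ t in (0:ℝ)..x, gψ t with hψ
  have hiψ : IntegrableOn gψ (Icc (0:ℝ) 1) := (hi₁.add hi₂).div_const 2
  have h0mem : (0:ℝ) ∈ Icc (0:ℝ) 1 := by norm_num
  have h1mem : (1:ℝ) ∈ Icc (0:ℝ) 1 := by norm_num
  -- ψ is the average of φ₁ and φ₂ on [0,1]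
  have hψval : ∀ x ∈ Icc (0:ℝ) 1, ψ x = (φ₁ x + φ₂ x)/2 := by
    intro x hx
    rw [hfor₁ x hx, hfor₂ x hx]
    show (∫ t in (0:ℝ)..x, (g₁ t + g₂ t)/2) = _
    rw [intervalIntegral.integral_div, intervalIntegral.integral_add
      (hii g₁ hi₁ 0 x h0mem hx) (hii g₂ hi₂ 0 x h0mem hx)]
  have hψ0 : ψ 0 = 0 := by simp [hψ]
  have hψ1 : ψ 1 = 1 := by
    rw [hψval 1 h1mem, hone₁, hone₂]; norm_num
  -- difference formulas
  have hdiff : ∀ (φ g : ℝ → ℝ), IntegrableOn g (Icc (0:ℝ) 1) →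
      (∀ x ∈ Icc (0:ℝ) 1, φ x = ∫ t in (0:ℝ)..x, g t) →
      ∀ a b : ℝ, a ∈ Icc (0:ℝ) 1 → b ∈ Icc (0:ℝ) 1 →
      φ b - φ a = ∫ t in a..b, g t := by
    intro φ g hg hfor a b ha hb
    rw [hfor a ha, hfor b hb]
    exact intervalIntegral.integral_interval_sub_left (hii g hg 0 b h0mem hb)
      (hii g hg 0 a h0mem ha)
  -- nonneg increments
  have hincr : ∀ (φ g : ℝ → ℝ), IntegrableOn g (Icc (0:ℝ) 1) →
      (∀ᵐ x ∂(volume.restrict (Icc (0:ℝ) 1)), 0 ≤ g x) →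
      (∀ x ∈ Icc (0:ℝ) 1, φ x = ∫ t in (0:ℝ)..x, g t) →
      ∀ a b : ℝ, a ∈ Icc (0:ℝ) 1 → b ∈ Icc (0:ℝ) 1 → a ≤ b → φ a ≤ φ b := by
    intro φ g hg hpos hfor a b ha hb hab
    have : (0:ℝ) ≤ ∫ t in a..b, g t := by
      rw [intervalIntegral.integral_of_le hab]
      refine setIntegral_nonneg_of_ae_restrict ?_
      have hsub : Ioc a b ⊆ Icc (0:ℝ) 1 := fun t ht => ⟨ha.1.trans ht.1.le, ht.2.trans hb.2⟩
      exact ae_restrict_of_ae_restrict_of_subset hsub hpos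
    linarith [hdiff φ g hg hfor a b ha hb]
  have hψpos : ∀ᵐ x ∂(volume.restrict (Icc (0:ℝ) 1)), 0 ≤ gψ x := by
    filter_upwards [hpos₁, hpos₂] with t h1 h2
    simp only [hgψ]; linarith
  have hψfor : ∀ x ∈ Icc (0:ℝ) 1, ψ x = ∫ t in (0:ℝ)..x, gψ t := fun x _ => rfl
  have hψmono := hincr ψ gψ hiψ hψpos hψfor
  have hφ₁mono := hincr φ₁ g₁ hi₁ hpos₁ hfor₁
  have hφ₂mono := hincr φ₂ g₂ hi₂ hpos₂ hfor₂
  have hφ₁0 : φ₁ 0 = 0 := by rw [hfor₁ 0 h0mem]; simp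
  have hφ₂0 : φ₂ 0 = 0 := by rw [hfor₂ 0 h0mem]; simp
  -- the doubling inequality
  have hdbl : ∀ a b : ℝ, a ∈ Icc (0:ℝ) 1 → b ∈ Icc (0:ℝ) 1 → a ≤ b →
      φ₁ b - φ₁ a ≤ 2*(ψ b - ψ a) := by
    intro a b ha hb hab
    have h2 : φ₂ a ≤ φ₂ b := hφ₂mono a b ha hb hab
    have e1 : ψ b - ψ a = ((φ₁ b + φ₂ b) - (φ₁ a + φ₂ a))/2 := by
      rw [hψval a ha, hψval b hb]; ring
    rw [e1]; linarith
  have hψmem : ∀ x ∈ Icc (0:ℝ) 1, ψ x ∈ Icc (0:ℝ) 1 := by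
    intro x hx
    constructor
    · rw [← hψ0]; exact hψmono 0 x h0mem hx hx.1
    · rw [← hψ1]; exact hψmono x 1 hx h1mem hx.2
  -- continuity of ψ on [0,1]
  have hψcont : ContinuousOn ψ (Icc (0:ℝ) 1) := by
    have := intervalIntegral.continuousOn_primitive_interval
      (a := (0:ℝ)) (b := 1) (μ := volume) (f := gψ) (by rwa [uIcc_of_le (by norm_num)])
    rwa [uIcc_of_le (by norm_num : (0:ℝ) ≤ 1)] at this
  -- the clamp function
  set c : ℝ → ℝ := fun y => max 0 (min 1 y) with hc
  have hcmem : ∀ y, c y ∈ Icc (0:ℝ) 1 := fun y => ⟨le_max_left _ _,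
    max_le (by norm_num) (min_le_left _ _)⟩
  have hcmono : Monotone c := fun a b hab =>
    max_le_max le_rfl (min_le_min le_rfl hab)
  have hclipW : LipschitzWith 1 c := (LipschitzWith.id.const_min 1).const_max 0
  have hclip : ∀ a b : ℝ, a ≤ b → c b - c a ≤ b - a := by
    intro a b hab
    have := hclipW.dist_le_mul a b
    rw [Real.dist_eq, Real.dist_eq, NNReal.coe_one, one_mul] at this
    rw [abs_sub_comm (c a), abs_sub_comm a,
      abs_of_nonneg (sub_nonneg.2 (hcmono hab)), abs_of_nonneg (sub_nonneg.2 hab)] at this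
    exact this
  have hcid : ∀ y ∈ Icc (0:ℝ) 1, c y = y := by
    intro y hy
    simp only [hc]
    rw [min_eq_right hy.2, max_eq_right hy.1]
  -- the generalized inverse of ψ
  set S : ℝ → Set ℝ := fun y => {x | x ∈ Icc (0:ℝ) 1 ∧ ψ x = c y} with hS
  have hSne : ∀ y, (S y).Nonempty := by
    intro y
    have hIVT := intermediate_value_Icc (by norm_num : (0:ℝ) ≤ 1) hψcont
    rw [hψ0, hψ1] at hIVT
    obtain ⟨x, hx, hxe⟩ := hIVT (hcmem y)
    exact ⟨x, hx, hxe⟩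
  have hSclosed : ∀ y, IsClosed (S y) := by
    intro y
    have : S y = Icc (0:ℝ) 1 ∩ ψ ⁻¹' {c y} := by
      ext x
      simp only [hS, Set.mem_setOf_eq, Set.mem_inter_iff, Set.mem_preimage,
        Set.mem_singleton_iff]
    rw [this]
    exact hψcont.preimage_isClosed_of_isClosed isClosed_Icc isClosed_singleton
  have hSbdd : ∀ y, BddBelow (S y) := fun y => ⟨0, fun x hx => hx.1.1⟩
  set σ : ℝ → ℝ := fun y => sInf (S y) with hσ
  have hσmem : ∀ y, σ y ∈ S y := fun y => (hSclosed y).csInf_mem (hSne y) (hSbdd y)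
  have hσle : ∀ y x, x ∈ S y → σ y ≤ x := fun y x hx => csInf_le (hSbdd y) hx
  have hσmono : Monotone σ := by
    intro y y' hyy'
    obtain ⟨hbmem, hbe⟩ := hσmem y'
    have hsub : Icc (0:ℝ) (σ y') ⊆ Icc (0:ℝ) 1 := Icc_subset_Icc le_rfl hbmem.2
    have hIVT := intermediate_value_Icc hbmem.1 (hψcont.mono hsub)
    rw [hψ0, hbe] at hIVT
    obtain ⟨z, hz, hze⟩ := hIVT ⟨(hcmem y).1, hcmono hyy'⟩
    exact (hσle y z ⟨⟨hz.1, hz.2.trans hbmem.2⟩, hze⟩).trans hz.2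
  -- γ₁
  set γ₁c : ℝ → ℝ := fun y => φ₁ (σ y) with hγ₁c
  have hsqueeze : ∀ y y' : ℝ, y ≤ y' →
      0 ≤ γ₁c y' - γ₁c y ∧ γ₁c y' - γ₁c y ≤ 2*(y' - y) := by
    intro y y' hyy'
    obtain ⟨ha, hae⟩ := hσmem y
    obtain ⟨hb, hbe⟩ := hσmem y'
    have hab : σ y ≤ σ y' := hσmono hyy'
    constructor
    · have := hφ₁mono (σ y) (σ y') ha hb hab
      simp only [hγ₁c]; linarith
    · have hd := hdbl (σ y) (σ y') ha hb hab
      rw [hae, hbe] at hd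
      have hcl := hclip y y' hyy'
      simp only [hγ₁c]; linarith
  have hγmono : Monotone γ₁c := fun y y' h => by linarith [(hsqueeze y y' h).1]
  have hγlip : LipschitzWith 2 γ₁c := by
    apply LipschitzWith.of_dist_le_mul
    intro a b
    rw [Real.dist_eq, Real.dist_eq]
    push_cast
    rcases le_total a b with h | h
    · obtain ⟨hh1, hh2⟩ := hsqueeze a b h
      rw [abs_sub_comm, abs_of_nonneg hh1, abs_sub_comm a, abs_of_nonneg (sub_nonneg.2 h)]
      linarith
    · obtain ⟨hh1, hh2⟩ := hsqueeze b a h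
      rw [abs_of_nonneg hh1, abs_of_nonneg (sub_nonneg.2 h)]
      linarith
  have hmono2' : Monotone (fun y => 2*y - γ₁c y) := by
    intro y y' h
    have := (hsqueeze y y' h).2
    simp only
    linarith
  have hγ0 : γ₁c 0 = 0 := by
    obtain ⟨hm, he⟩ := hσmem 0
    have hc0 : c 0 = 0 := hcid 0 h0mem
    have hd := hdbl 0 (σ 0) h0mem hm hm.1
    rw [hψ0, he, hc0] at hd
    have := hφ₁mono 0 (σ 0) h0mem hm hm.1
    simp only [hγ₁c]
    linarith
  have hγ1 : γ₁c 1 = 1 := by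
    obtain ⟨hm, he⟩ := hσmem 1
    have hc1 : c 1 = 1 := hcid 1 h1mem
    have hd := hdbl (σ 1) 1 hm h1mem hm.2
    rw [hψ1, he, hc1] at hd
    have := hφ₁mono (σ 1) 1 hm h1mem hm.2
    simp only [hγ₁c]
    linarith
  have hcomp1 : ∀ x ∈ Icc (0:ℝ) 1, φ₁ x = γ₁c (ψ x) := by
    intro x hx
    have hψx := hψmem x hx
    have hcψ : c (ψ x) = ψ x := hcid _ hψx
    have hxS : x ∈ S (ψ x) := ⟨hx, hcψ.symm⟩
    have hle := hσle (ψ x) x hxS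
    obtain ⟨hm, he⟩ := hσmem (ψ x)
    have hd := hdbl (σ (ψ x)) x hm hx hle
    rw [he, hcψ] at hd
    have := hφ₁mono (σ (ψ x)) x hm hx hle
    simp only [hγ₁c]
    linarith
  have hcomp2 : ∀ x ∈ Icc (0:ℝ) 1, φ₂ x = 2*(ψ x) - γ₁c (ψ x) := by
    intro x hx
    rw [← hcomp1 x hx, hψval x hx]
    ring
  have hγ₂lip : LipschitzWith 2 (fun y => 2*y - γ₁c y) := by
    apply LipschitzWith.of_dist_le_mul
    intro a b
    rw [Real.dist_eq, Real.dist_eq]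
    push_cast
    rcases le_total a b with h | h
    · obtain ⟨hh1, hh2⟩ := hsqueeze a b h
      rw [abs_sub_comm, abs_sub_comm a, abs_of_nonneg (sub_nonneg.2 h),
        abs_of_nonneg (by linarith : (0:ℝ) ≤ (2*b - γ₁c b) - (2*a - γ₁c a))]
      linarith
    · obtain ⟨hh1, hh2⟩ := hsqueeze b a h
      rw [abs_of_nonneg (sub_nonneg.2 h),
        abs_of_nonneg (by linarith : (0:ℝ) ≤ (2*a - γ₁c a) - (2*b - γ₁c b))]
      linarith
  obtain ⟨h', hint1, hint2, haeb, hform1, hform2⟩ :=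
    pair_density γ₁c hγmono hmono2' hγlip.continuous hγ0
  refine ⟨ψ, gψ, γ₁c, fun y => 2*y - γ₁c y, h', fun y => 2 - h' y,
    ⟨hiψ, hψpos, hψfor, hψ1⟩,
    ⟨hint1, ?_, hform1, hγ1⟩,
    ⟨hint2, ?_, hform2, by simp only; rw [hγ1]; norm_num⟩,
    ?_, hγlip.lipschitzOnWith, hγ₂lip.lipschitzOnWith, hcomp1, hcomp2⟩
  · filter_upwards [haeb] with y hy
    exact hy.1
  · filter_upwards [haeb] with y hy
    linarith [hy.2]
  · exact Filter.Eventually.of_forall fun x => by ring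
end

section
/- Let ψ ∈ Γ̄ and define ψ^{(k)} = (1/k)·Id + (1 − 1/k)·ψ for k ∈ ℕ. Then ψ^{(k)} ∈ Γ̄, ‖ψ^{(k)} − ψ‖_∞ ≤ 2/k, (ψ^{(k)})' ≥ 1/k a.e., and ψ^{(k)} is invertible with inverse (ψ^{(k)})⁻¹ ∈ Γ, where Γ = {γ ∈ AC([0,1];[0,1]) : γ(0)=0, γ(1)=1, γ' > 0 a.e.}. -/
open MeasureTheory Set

/-- `γ ∈ Γ` : as `Γ̄`, but with a.e. strictly positive derivative. -/
def InGamma (γ g : ℝ → ℝ) : Prop :=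
  InGammaBar γ g ∧ ∀ᵐ x ∂(volume.restrict (Set.Icc (0:ℝ) 1)), 0 < g x

open Filter in
private lemma aux_inverse (G : ℝ → ℝ) (hGm : Measurable G) (hGi : Integrable G volume)
    (hGnn : ∀ x, 0 ≤ G x) (c : ℝ) (hc : 0 < c) :
    ∃ Θ gθ : ℝ → ℝ,
      Monotone Θ ∧
      (∀ x, Θ (∫ t in (0:ℝ)..x, (c + G t)) = x) ∧
      (∀ y, (∫ t in (0:ℝ)..(Θ y), (c + G t)) = y) ∧
      IntegrableOn gθ (Icc (0:ℝ) 1) ∧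
      (∀ x ∈ Icc (0:ℝ) 1, Θ x = ∫ t in (0:ℝ)..x, gθ t) ∧
      (∀ᵐ x ∂(volume.restrict (Icc (0:ℝ) 1)), 0 < gθ x) := by
  set g : ℝ → ℝ := fun t => c + G t with hgdef
  have hgm : Measurable g := measurable_const.add hGm
  have hglb : ∀ x, c ≤ g x := fun x => le_add_of_nonneg_right (hGnn x)
  have hgnn : ∀ x, 0 ≤ g x := fun x => hc.le.trans (hglb x)
  have hgii : ∀ a b : ℝ, IntervalIntegrable g volume a b := fun a b =>
    intervalIntegrable_const.add hGi.intervalIntegrable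
  set Ψ : ℝ → ℝ := fun y => ∫ t in (0:ℝ)..y, g t with hΨdef
  have hΨd : ∀ a b : ℝ, Ψ b - Ψ a = ∫ t in a..b, g t := fun a b =>
    intervalIntegral.integral_interval_sub_left (hgii 0 b) (hgii 0 a)
  have hΨmono : ∀ a b : ℝ, a ≤ b → c * (b - a) ≤ Ψ b - Ψ a := by
    intro a b hab
    rw [hΨd]
    calc c * (b - a) = ∫ _t in a..b, c := by
          rw [intervalIntegral.integral_const, smul_eq_mul]; ring
      _ ≤ ∫ t in a..b, g t :=
          intervalIntegral.integral_mono_on hab intervalIntegrable_const (hgii a b)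
            (fun x _ => hglb x)
  have hΨsm : StrictMono Ψ := by
    intro a b hab
    have h1 := hΨmono a b hab.le
    nlinarith [mul_pos hc (sub_pos.2 hab)]
  have hΨ0 : Ψ 0 = 0 := intervalIntegral.integral_same
  have hΨcont : Continuous Ψ := intervalIntegral.continuous_primitive hgii 0
  have htop : Tendsto Ψ atTop atTop := by
    refine tendsto_atTop_mono' atTop (f₁ := fun y => c * y) ?_ ?_
    · filter_upwards [eventually_ge_atTop (0:ℝ)] with y hy
      have := hΨmono 0 y hy
      rw [hΨ0] at this; nlinarith
    · exact Tendsto.const_mul_atTop hc tendsto_id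
  have hbot : Tendsto Ψ atBot atBot := by
    refine tendsto_atBot_mono' atBot (f₁ := fun y => c * y) ?_ ?_
    · filter_upwards [eventually_le_atBot (0:ℝ)] with y hy
      have := hΨmono y 0 hy
      rw [hΨ0] at this; nlinarith
    · exact Tendsto.const_mul_atBot hc tendsto_id
  have hΨsurj : Function.Surjective Ψ := hΨcont.surjective htop hbot
  set e := StrictMono.orderIsoOfSurjective Ψ hΨsm hΨsurj with hedef
  set Θ : ℝ → ℝ := fun y => e.symm y with hΘdef
  have hΘΨ : ∀ x, Θ (Ψ x) = x := fun x =>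
    StrictMono.orderIsoOfSurjective_symm_apply_self Ψ hΨsm hΨsurj x
  have hΨΘ : ∀ y, Ψ (Θ y) = y := fun y => e.apply_symm_apply y
  have hΘmono : Monotone Θ := (e.symm : ℝ ≃o ℝ).monotone
  have hΘcont : Continuous Θ := (e.symm : ℝ ≃o ℝ).continuous
  have hΘ0 : Θ 0 = 0 := by have := hΘΨ 0; rwa [hΨ0] at this
  have hΘlip : ∀ a b : ℝ, a ≤ b → Θ b - Θ a ≤ (b - a) / c := by
    intro a b hab
    have h2 : Θ a ≤ Θ b := hΘmono hab
    have h3 := hΨmono (Θ a) (Θ b) h2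
    rw [hΨΘ, hΨΘ] at h3
    rw [le_div_iff₀ hc]; nlinarith
  set ΘS : StieltjesFunction ℝ :=
    ⟨Θ, hΘmono, fun x => hΘcont.continuousAt.continuousWithinAt⟩ with hΘSdef
  have hcoe : (ΘS : ℝ → ℝ) = Θ := rfl
  have hLmono : Monotone (fun y : ℝ => y / c - Θ y) := by
    intro a b hab
    have h1 := hΘlip a b hab
    have h2 : (b - a) / c = b / c - a / c := sub_div b a c
    simp only
    linarith
  set L : StieltjesFunction ℝ :=
    ⟨fun y => y / c - Θ y, hLmono,
      fun x => ((continuous_id.div_const c).sub hΘcont).continuousAt.continuousWithinAt⟩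
       with hLdef
  have hLcoe : (L : ℝ → ℝ) = fun y => y / c - Θ y := rfl
  have hadd : ΘS.measure + L.measure = (ENNReal.ofReal (1 / c)) • volume := by
    refine Measure.ext_of_Ioc' _ _ (fun a b hab => ?_) (fun a b hab => ?_)
    · rw [Measure.add_apply, StieltjesFunction.measure_Ioc, StieltjesFunction.measure_Ioc]
      exact (ENNReal.add_lt_top.2 ⟨ENNReal.ofReal_lt_top, ENNReal.ofReal_lt_top⟩).ne
    · rw [Measure.add_apply, StieltjesFunction.measure_Ioc, StieltjesFunction.measure_Ioc,
        Measure.smul_apply, Real.volume_Ioc, smul_eq_mul,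
        ← ENNReal.ofReal_mul (by positivity), hcoe, hLcoe]
      have h1 : (0:ℝ) ≤ Θ b - Θ a := sub_nonneg.2 (hΘmono hab.le)
      have h2 : (0:ℝ) ≤ (b / c - Θ b) - (a / c - Θ a) := sub_nonneg.2 (hLmono hab.le)
      rw [← ENNReal.ofReal_add h1 h2]
      congr 1
      field_simp
      ring
  have hac : ΘS.measure ≪ volume := by
    refine Measure.AbsolutelyContinuous.mk (fun s hs h0 => ?_)
    have h1 : ΘS.measure s ≤ (ΘS.measure + L.measure) s := by
      rw [Measure.add_apply]; exact le_self_add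
    rw [hadd, Measure.smul_apply, h0] at h1
    simpa using h1
  have hrnm : Measurable (ΘS.measure.rnDeriv volume) := Measure.measurable_rnDeriv _ _
  refine ⟨Θ, fun y => (ΘS.measure.rnDeriv volume y).toReal, hΘmono, hΘΨ, hΨΘ, ?_, ?_, ?_⟩
  · -- integrability
    refine integrable_toReal_of_lintegral_ne_top hrnm.aemeasurable ?_
    rw [Measure.setLIntegral_rnDeriv hac]
    have hsub : Icc (0:ℝ) 1 ⊆ Ioc (-1:ℝ) 1 := fun x hx =>
      mem_Ioc.2 ⟨lt_of_lt_of_le (by norm_num : (-1:ℝ) < 0) hx.1, hx.2⟩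
    refine ne_of_lt (lt_of_le_of_lt (measure_mono hsub) ?_)
    rw [StieltjesFunction.measure_Ioc]
    exact ENNReal.ofReal_lt_top
  · -- the identity
    intro x hx
    rw [intervalIntegral.integral_of_le hx.1,
      integral_toReal hrnm.aemeasurable (ae_restrict_of_ae (Measure.rnDeriv_lt_top _ _)),
      Measure.setLIntegral_rnDeriv hac, StieltjesFunction.measure_Ioc, hcoe, hΘ0,
      ENNReal.toReal_ofReal (by
        have := hΘmono hx.1
        rw [hΘ0] at this
        linarith)]
    ring
  · -- positivity
    set A : Set ℝ := {y : ℝ | ΘS.measure.rnDeriv volume y = 0} with hAdef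
    have hAm : MeasurableSet A := hrnm (measurableSet_singleton 0)
    have hμA : ΘS.measure A = 0 := by
      rw [← Measure.setLIntegral_rnDeriv hac,
        setLIntegral_congr_fun hAm (fun y hy => hy)]
      simp
    have hkey1 : ∀ u v : ℝ, Θ u < v ↔ u < Ψ v := fun u v => by
      rw [← hΨsm.lt_iff_lt (a := Θ u) (b := v), hΨΘ]
    have hkey2 : ∀ u v : ℝ, u ≤ Θ v ↔ Ψ u ≤ v := fun u v => by
      rw [← hΨsm.le_iff_le (a := u) (b := Θ v), hΨΘ]
    have hmap1 : ΘS.measure = Measure.map Ψ volume := by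
      refine Measure.ext_of_Ioc' _ _
        (fun a b hab => by rw [StieltjesFunction.measure_Ioc]; exact ENNReal.ofReal_ne_top)
        (fun a b hab => ?_)
      rw [StieltjesFunction.measure_Ioc, Measure.map_apply hΨcont.measurable measurableSet_Ioc]
      have hpre : Ψ ⁻¹' (Ioc a b) = Ioc (Θ a) (Θ b) := by
        ext t
        simp only [mem_preimage, mem_Ioc]
        rw [hkey1, ← hkey2]
      rw [hpre, Real.volume_Ioc, hcoe]
    have hB : volume (Ψ ⁻¹' A) = 0 := by
      rw [← Measure.map_apply hΨcont.measurable hAm, ← hmap1]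
      exact hμA
    have hkey3 : ∀ u v : ℝ, u < Θ v ↔ Ψ u < v := fun u v => by
      rw [← hΨsm.lt_iff_lt (a := u) (b := Θ v), hΨΘ]
    have hkey4 : ∀ u v : ℝ, Θ u ≤ v ↔ u ≤ Ψ v := fun u v => by
      rw [← hΨsm.le_iff_le (a := Θ u) (b := v), hΨΘ]
    have hmap2 : Measure.map Θ volume = volume.withDensity (fun y => ENNReal.ofReal (g y)) := by
      have hpre : ∀ a b : ℝ, Θ ⁻¹' (Ioc a b) = Ioc (Ψ a) (Ψ b) := by
        intro a b
        ext t
        simp only [mem_preimage, mem_Ioc]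
        rw [hkey3, hkey4]
      refine Measure.ext_of_Ioc' _ _ (fun a b hab => ?_) (fun a b hab => ?_)
      · rw [Measure.map_apply hΘcont.measurable measurableSet_Ioc, hpre, Real.volume_Ioc]
        exact ENNReal.ofReal_ne_top
      · rw [Measure.map_apply hΘcont.measurable measurableSet_Ioc, hpre, Real.volume_Ioc,
          withDensity_apply _ measurableSet_Ioc]
        have hsub : Ψ b - Ψ a = ∫ t in Ioc a b, g t := by
          rw [hΨd a b, intervalIntegral.integral_of_le hab.le]
        rw [hsub, ofReal_integral_eq_lintegral_ofReal ((hgii a b).1)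
          (ae_of_all _ (fun x => hgnn x))]
    have hA0 : volume A = 0 := by
      have hAeq : A = Θ ⁻¹' (Ψ ⁻¹' A) := by
        ext y
        simp only [mem_preimage, hΨΘ y]
      rw [hAeq, ← Measure.map_apply hΘcont.measurable (hΨcont.measurable hAm), hmap2]
      exact withDensity_absolutelyContinuous _ _ hB
    have h1 : ∀ᵐ y ∂(volume.restrict (Icc (0:ℝ) 1)), ΘS.measure.rnDeriv volume y ≠ 0 := by
      refine ae_restrict_of_ae ?_
      rw [ae_iff]
      simpa [hAdef] using hA0
    have h2 : ∀ᵐ y ∂(volume.restrict (Icc (0:ℝ) 1)), ΘS.measure.rnDeriv volume y < ⊤ :=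
      ae_restrict_of_ae (Measure.rnDeriv_lt_top _ _)
    filter_upwards [h1, h2] with y hy1 hy2
    exact ENNReal.toReal_pos hy1 hy2.ne

/-- Let `ψ ∈ Γ̄` and `ψ⁽ᵏ⁾ = (1/k)·Id + (1−1/k)·ψ`.  Then
`ψ⁽ᵏ⁾ ∈ Γ̄` with a.e. derivative `≥ 1/k`, `‖ψ⁽ᵏ⁾ − ψ‖_∞ ≤ 2/k` on `[0,1]`, and
`ψ⁽ᵏ⁾` is invertible on `[0,1]` with inverse in `Γ`. -/
theorem convex_combination_reparam (ψ gψ : ℝ → ℝ) (hψ : InGammaBar ψ gψ)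
    (k : ℕ) (hk : 1 ≤ k)
    (ψk : ℝ → ℝ)
    (hψk : ∀ x, ψk x = (1 / (k:ℝ)) * x + (1 - 1 / (k:ℝ)) * ψ x) :
    (∃ gk : ℝ → ℝ, InGammaBar ψk gk ∧
      ∀ᵐ x ∂(volume.restrict (Icc (0:ℝ) 1)), 1 / (k:ℝ) ≤ gk x) ∧
    (∀ x ∈ Icc (0:ℝ) 1, |ψk x - ψ x| ≤ 2 / (k:ℝ)) ∧
    ∃ θ gθ : ℝ → ℝ, InGamma θ gθ ∧
      (∀ x ∈ Icc (0:ℝ) 1, θ (ψk x) = x) ∧ (∀ x ∈ Icc (0:ℝ) 1, ψk (θ x) = x) := by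
  obtain ⟨hgψint, hgψnn, hψeq, hψ1⟩ := hψ
  have hk1 : (1:ℝ) ≤ (k:ℝ) := by exact_mod_cast hk
  have hkpos : (0:ℝ) < k := by linarith
  have hc : 0 < 1/(k:ℝ) := by positivity
  have h1k : (0:ℝ) ≤ 1 - 1/(k:ℝ) := by
    rw [sub_nonneg, div_le_one hkpos]; exact hk1
  have ham : AEMeasurable gψ (volume.restrict (Icc (0:ℝ) 1)) := hgψint.aemeasurable
  set g1 : ℝ → ℝ := ham.mk gψ with hg1def
  have hg1m : Measurable g1 := ham.measurable_mk
  have hg1ae : gψ =ᵐ[volume.restrict (Icc (0:ℝ) 1)] g1 := ham.ae_eq_mk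
  set G : ℝ → ℝ :=
    fun t => (1 - 1/(k:ℝ)) * Set.indicator (Icc (0:ℝ) 1) (fun s => |g1 s|) t with hGdef
  have hGm : Measurable G := measurable_const.mul (hg1m.abs.indicator measurableSet_Icc)
  have hGnn : ∀ t, 0 ≤ G t := fun t =>
    mul_nonneg h1k (indicator_nonneg (fun s _ => abs_nonneg _) t)
  have hGi : Integrable G volume := by
    apply Integrable.const_mul
    rw [integrable_indicator_iff measurableSet_Icc]
    exact (hgψint.congr hg1ae).abs
  have haeIcc : ∀ᵐ t ∂(volume.restrict (Icc (0:ℝ) 1)),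
      G t = (1 - 1/(k:ℝ)) * gψ t := by
    filter_upwards [hg1ae, hgψnn, ae_restrict_mem measurableSet_Icc] with t h1 h2 h3
    rw [hGdef]
    simp only
    rw [indicator_of_mem h3, ← h1, abs_of_nonneg h2]
  -- interval integrability of gψ within [0,1]
  have hgψii : ∀ x ∈ Icc (0:ℝ) 1, ∀ y ∈ Icc (0:ℝ) 1, IntervalIntegrable gψ volume x y := by
    intro x hx y hy
    apply IntegrableOn.intervalIntegrable
    refine hgψint.mono_set ?_
    intro t ht
    rcases le_total x y with h | h
    · rw [uIcc_of_le h] at ht; exact ⟨hx.1.trans ht.1, ht.2.trans hy.2⟩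
    · rw [uIcc_of_ge h] at ht; exact ⟨hy.1.trans ht.1, ht.2.trans hx.2⟩
  have h01 : (0:ℝ) ∈ Icc (0:ℝ) 1 := ⟨le_refl 0, by norm_num⟩
  have h11 : (1:ℝ) ∈ Icc (0:ℝ) 1 := ⟨by norm_num, le_refl 1⟩
  -- ψ maps [0,1] to [0,1]
  have hψmono : ∀ x ∈ Icc (0:ℝ) 1, ∀ y ∈ Icc (0:ℝ) 1, x ≤ y → ψ x ≤ ψ y := by
    intro x hx y hy hxy
    have hd : ψ y - ψ x = ∫ t in x..y, gψ t := by
      rw [hψeq x hx, hψeq y hy]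
      exact intervalIntegral.integral_interval_sub_left (hgψii 0 h01 y hy) (hgψii 0 h01 x hx)
    have hnn : 0 ≤ ∫ t in x..y, gψ t := by
      rw [intervalIntegral.integral_of_le hxy]
      have hsub : Ioc x y ⊆ Icc (0:ℝ) 1 := fun t ht => ⟨hx.1.trans ht.1.le, ht.2.trans hy.2⟩
      exact setIntegral_nonneg_of_ae_restrict
        (ae_restrict_of_ae_restrict_of_subset hsub hgψnn)
    linarith
  have hψ0 : ψ 0 = 0 := by rw [hψeq 0 h01, intervalIntegral.integral_same]
  have hψmem : ∀ x ∈ Icc (0:ℝ) 1, ψ x ∈ Icc (0:ℝ) 1 := by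
    intro x hx
    constructor
    · have := hψmono 0 h01 x hx hx.1
      rwa [hψ0] at this
    · have := hψmono x hx 1 h11 hx.2
      rwa [hψ1] at this
  -- key: the primitive of gk equals ψk on [0,1]
  have hΨeq : ∀ x ∈ Icc (0:ℝ) 1, (∫ t in (0:ℝ)..x, (1/(k:ℝ) + G t)) = ψk x := by
    intro x hx
    have hsub : Ioc (0:ℝ) x ⊆ Icc (0:ℝ) 1 := fun t ht => ⟨ht.1.le, ht.2.trans hx.2⟩
    have hae' : ∀ᵐ t ∂(volume.restrict (Ioc (0:ℝ) x)), G t = (1 - 1/(k:ℝ)) * gψ t :=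
      ae_restrict_of_ae_restrict_of_subset hsub haeIcc
    have hGint : ∫ t in (0:ℝ)..x, G t = (1 - 1/(k:ℝ)) * ∫ t in (0:ℝ)..x, gψ t := by
      rw [intervalIntegral.integral_of_le hx.1, intervalIntegral.integral_of_le hx.1,
        integral_congr_ae hae', integral_const_mul]
    rw [intervalIntegral.integral_add intervalIntegrable_const hGi.intervalIntegrable,
      intervalIntegral.integral_const, hGint, ← hψeq x hx, hψk x, smul_eq_mul]
    ring
  have hψk1 : ψk 1 = 1 := by rw [hψk 1, hψ1]; ring
  refine ⟨?_, ?_, ?_⟩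
  · -- first bullet
    refine ⟨fun t => 1/(k:ℝ) + G t, ⟨?_, ?_, ?_, ?_⟩, ?_⟩
    · exact (integrableOn_const (by rw [Real.volume_Icc]; exact ENNReal.ofReal_ne_top)).add
        hGi.integrableOn
    · exact ae_of_all _ (fun t => add_nonneg hc.le (hGnn t))
    · exact fun x hx => (hΨeq x hx).symm
    · exact hψk1
    · exact ae_of_all _ (fun t => le_add_of_nonneg_right (hGnn t))
  · -- sup bound
    intro x hx
    have hψx := hψmem x hx
    have habs : |x - ψ x| ≤ 1 := by
      rw [abs_le]
      constructor <;> [nlinarith [hx.1, hψx.2]; nlinarith [hx.2, hψx.1]]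
    have hrw : ψk x - ψ x = (1/(k:ℝ)) * (x - ψ x) := by rw [hψk x]; ring
    rw [hrw, abs_mul, abs_of_pos hc]
    calc (1/(k:ℝ)) * |x - ψ x| ≤ (1/(k:ℝ)) * 1 := by
          exact mul_le_mul_of_nonneg_left habs hc.le
      _ ≤ 2/(k:ℝ) := by
          rw [mul_one]
          gcongr
          norm_num
  · -- inverse
    obtain ⟨Θ, gθ, hmono, hΘΨ, hΨΘ, hint, hid, hpos⟩ :=
      aux_inverse G hGm hGi hGnn (1/(k:ℝ)) hc
    have hθψk : ∀ x ∈ Icc (0:ℝ) 1, Θ (ψk x) = x := fun x hx => by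
      rw [← hΨeq x hx]; exact hΘΨ x
    have hΘ0 : Θ 0 = 0 := by
      have := hΘΨ 0
      rwa [intervalIntegral.integral_same] at this
    have hΘ1 : Θ 1 = 1 := by
      have := hθψk 1 h11
      rwa [hψk1] at this
    refine ⟨Θ, gθ, ⟨⟨hint, ?_, hid, hΘ1⟩, hpos⟩, hθψk, ?_⟩
    · filter_upwards [hpos] with t ht
      exact ht.le
    · intro x hx
      have hΘx : Θ x ∈ Icc (0:ℝ) 1 :=
        ⟨by rw [← hΘ0]; exact hmono hx.1, by rw [← hΘ1]; exact hmono hx.2⟩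
      rw [← hΨeq (Θ x) hΘx]
      exact hΨΘ x
end
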